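/- arXiv:1209.1429 — 7 statements merged into one kernel-verified Lean document; each statement's English description precedes it below -/
import Mathlib

section
/- Let ψ be an additive character of ℚ_p of conductor c, let μ be an additive Haar measure on ℚ_p, and set δ = 1 if p = 2 and δ = 0 otherwise. If f : ℚ_p → ℂ is supported on p^m ℤ_p and is constant on each additive coset of p^n ℤ_p (for integers m ≤ n), then its Fourier transform f̂(y) = ∫_{ℚ_p} ψ(2uy) f(u) dμ(u) is supported on p^(-n + c - δ) ℤ_p and is constant on each additive coset of p^(-m + c - δ) ℤ_p. -/
open MeasureTheory

/-- Let `ψ` be an additive character of `ℚ_p` of conductor `c`, `μ` an additive Haar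
measure on `ℚ_p`, and `δ = 1` if `p = 2`, `δ = 0` otherwise.  If `f : ℚ_p → ℂ` is
supported on `p^m ℤ_p` and constant on additive cosets of `p^n ℤ_p` (`m ≤ n`), then
its Fourier transform `f̂ y = ∫ ψ(2 u y) f u dμ(u)` is supported on
`p^(-n + c - δ) ℤ_p` and constant on additive cosets of `p^(-m + c - δ) ℤ_p`.
Here `p^k ℤ_p = {x | ‖x‖ ≤ p^(-k)}`. -/
theorem fourierTransform_support_and_invariance (p : ℕ) [Fact p.Prime]
    [MeasurableSpace ℚ_[p]] [BorelSpace ℚ_[p]]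
    (ψ : ℚ_[p] → ℂ) (c : ℤ)
    (hcont : Continuous ψ)
    (hhom : ∀ x y : ℚ_[p], ψ (x + y) = ψ x * ψ y)
    (hcircle : ∀ x : ℚ_[p], ‖ψ x‖ = 1)
    (htriv : ∀ x : ℚ_[p], ‖x‖ ≤ (p : ℝ) ^ (-c) → ψ x = 1)
    (hnontriv : ∃ x : ℚ_[p], ‖x‖ ≤ (p : ℝ) ^ (-(c - 1)) ∧ ψ x ≠ 1)
    (μ : Measure ℚ_[p]) [μ.IsAddHaarMeasure]
    (δ : ℤ) (hδ : δ = if p = 2 then 1 else 0)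
    (m n : ℤ) (hmn : m ≤ n) (f : ℚ_[p] → ℂ)
    (hsupp : ∀ u : ℚ_[p], ¬ ‖u‖ ≤ (p : ℝ) ^ (-m) → f u = 0)
    (hconst : ∀ u v : ℚ_[p], ‖u - v‖ ≤ (p : ℝ) ^ (-n) → f u = f v) :
    (∀ y : ℚ_[p], ¬ ‖y‖ ≤ (p : ℝ) ^ (-(-n + c - δ)) →
        (∫ u, ψ (2 * u * y) * f u ∂μ) = 0) ∧
    (∀ y y' : ℚ_[p], ‖y - y'‖ ≤ (p : ℝ) ^ (-(-m + c - δ)) →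
        (∫ u, ψ (2 * u * y) * f u ∂μ) = ∫ u, ψ (2 * u * y') * f u ∂μ) := by
  have hp : p.Prime := Fact.out
  have hp1 : (1 : ℝ) < p := by exact_mod_cast hp.one_lt
  have hp0 : (0 : ℝ) < p := lt_trans one_pos hp1
  -- the norm of 2 in ℚ_p
  have h2 : ‖(2 : ℚ_[p])‖ = (p : ℝ) ^ (-δ) := by
    subst hδ
    by_cases hp2 : p = 2
    · subst hp2
      have : ((2 : ℕ) : ℚ_[2]) = (2 : ℚ_[2]) := by norm_num
      rw [← this, Padic.norm_p]
      norm_num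
    · simp only [hp2, if_false, neg_zero, zpow_zero]
      have hle : ‖((2 : ℤ) : ℚ_[p])‖ ≤ 1 := Padic.norm_int_le_one 2
      have hnlt : ¬ ‖((2 : ℤ) : ℚ_[p])‖ < 1 := by
        rw [Padic.norm_intCast_lt_one_iff]
        intro hdvd
        have hd : p ∣ 2 := by exact_mod_cast hdvd
        exact hp2 ((Nat.prime_dvd_prime_iff_eq hp Nat.prime_two).mp hd)
      have : ‖((2 : ℤ) : ℚ_[p])‖ = 1 := le_antisymm hle (not_lt.mp hnlt)
      simpa using this
  refine ⟨?_, ?_⟩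
  · -- support of the Fourier transform
    intro y hy
    have hy0 : y ≠ 0 := by
      rintro rfl
      exact hy (by simp [le_of_lt (zpow_pos hp0 _)])
    obtain ⟨x, hx, hψx⟩ := hnontriv
    have h2y : (2 * y : ℚ_[p]) ≠ 0 := mul_ne_zero two_ne_zero hy0
    set v : ℚ_[p] := x / (2 * y) with hv
    have hvy : 2 * v * y = x := by
      rw [hv]
      field_simp
    -- lower bound on ‖y‖
    have hyn : (p : ℝ) ^ (n - c + δ + 1) ≤ ‖y‖ := by
      rw [Padic.norm_eq_zpow_neg_valuation hy0] at hy ⊢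
      rw [not_le] at hy
      have : -(-n + c - δ) < -y.valuation := by
        exact (zpow_lt_zpow_iff_right₀ hp1).mp hy
      have : n - c + δ + 1 ≤ -y.valuation := by omega
      exact zpow_le_zpow_right₀ (le_of_lt hp1) this
    have hvnorm : ‖v‖ ≤ (p : ℝ) ^ (-n) := by
      have h2ypos : (0 : ℝ) < ‖(2 * y : ℚ_[p])‖ := norm_pos_iff.mpr h2y
      rw [hv, norm_div, div_le_iff₀ h2ypos]
      have h2ylb : (p : ℝ) ^ (n - c + 1) ≤ ‖(2 * y : ℚ_[p])‖ := by
        rw [norm_mul, h2]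
        calc (p : ℝ) ^ (n - c + 1) = (p : ℝ) ^ (-δ) * (p : ℝ) ^ (n - c + δ + 1) := by
              rw [← zpow_add₀ (ne_of_gt hp0)]; ring_nf
          _ ≤ (p : ℝ) ^ (-δ) * ‖y‖ := by
              exact mul_le_mul_of_nonneg_left hyn (le_of_lt (zpow_pos hp0 _))
      calc ‖x‖ ≤ (p : ℝ) ^ (-(c - 1)) := hx
        _ = (p : ℝ) ^ (-n) * (p : ℝ) ^ (n - c + 1) := by
              rw [← zpow_add₀ (ne_of_gt hp0)]; ring_nf
        _ ≤ (p : ℝ) ^ (-n) * ‖(2 * y : ℚ_[p])‖ := by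
              exact mul_le_mul_of_nonneg_left h2ylb (le_of_lt (zpow_pos hp0 _))
    have key : (∫ u, ψ (2 * u * y) * f u ∂μ) = ψ x * ∫ u, ψ (2 * u * y) * f u ∂μ := by
      conv_lhs => rw [← integral_add_right_eq_self (fun u => ψ (2 * u * y) * f u) v]
      rw [← integral_const_mul]
      refine integral_congr_ae (ae_of_all μ fun u => ?_)
      have hf : f (u + v) = f u := hconst _ _ (by simpa using hvnorm)
      have harg : 2 * (u + v) * y = 2 * u * y + 2 * v * y := by ring
      simp only [harg, hhom, hvy, hf]
      ring
    have hz : (1 - ψ x) * (∫ u, ψ (2 * u * y) * f u ∂μ) = 0 := by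
      rw [sub_mul, one_mul, sub_eq_zero]
      exact key
    rcases mul_eq_zero.mp hz with h | h
    · exact absurd (sub_eq_zero.mp h).symm hψx
    · exact h
  · -- invariance of the Fourier transform
    intro y y' h
    refine integral_congr_ae (ae_of_all μ fun u => ?_)
    by_cases hu : ‖u‖ ≤ (p : ℝ) ^ (-m)
    · have heq : ψ (2 * u * y) = ψ (2 * u * y') := by
        have harg : 2 * u * y = 2 * u * y' + 2 * u * (y - y') := by ring
        rw [harg, hhom]
        have h1 : ψ (2 * u * (y - y')) = 1 := by
          refine htriv _ ?_
          calc ‖2 * u * (y - y')‖ = ‖(2 : ℚ_[p])‖ * ‖u‖ * ‖y - y'‖ := by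
                rw [norm_mul, norm_mul]
            _ ≤ (p : ℝ) ^ (-δ) * (p : ℝ) ^ (-m) * (p : ℝ) ^ (-(-m + c - δ)) := by
                refine mul_le_mul (mul_le_mul (le_of_eq h2) hu (norm_nonneg _)
                  (le_of_lt (zpow_pos hp0 _))) h (norm_nonneg _) ?_
                positivity
            _ = (p : ℝ) ^ (-c) := by
                rw [← zpow_add₀ (ne_of_gt hp0), ← zpow_add₀ (ne_of_gt hp0)]; ring_nf
        rw [h1, mul_one]
      show ψ (2 * u * y) * f u = ψ (2 * u * y') * f u
      rw [heq]
    · show ψ (2 * u * y) * f u = ψ (2 * u * y') * f u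
      rw [hsupp u hu, mul_zero, mul_zero]
end

section
/- Let ψ be an additive character of ℚ₂ of conductor 1 and let μ be the additive Haar measure on ℚ₂ normalized so that μ(ℤ₂) = 1. Then for every t ∈ 2ℤ₂, ∫_{1/2 + ℤ₂} ψ(-t u²) dμ(u) = ψ(-t/4). -/
open MeasureTheory

/-- Let `ψ` be an additive character of `ℚ₂` of conductor `1` and let `μ` be the
additive Haar measure on `ℚ₂` normalized so that `μ(ℤ₂) = 1`.  Then for every
`t ∈ 2ℤ₂`, `∫_{1/2 + ℤ₂} ψ(-t u²) dμ(u) = ψ(-t/4)`. -/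
theorem integral_coset_half (ψ : ℚ_[2] → ℂ)
    [MeasurableSpace ℚ_[2]] [BorelSpace ℚ_[2]]
    (hcont : Continuous ψ)
    (hhom : ∀ x y : ℚ_[2], ψ (x + y) = ψ x * ψ y)
    (hcircle : ∀ x : ℚ_[2], ‖ψ x‖ = 1)
    (htriv : ∀ x : ℚ_[2], ‖x‖ ≤ (2 : ℝ)⁻¹ → ψ x = 1)
    (hnontriv : ∃ x : ℚ_[2], ‖x‖ ≤ 1 ∧ ψ x ≠ 1)
    (μ : Measure ℚ_[2]) [μ.IsAddHaarMeasure]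
    (hμ : μ {x : ℚ_[2] | ‖x‖ ≤ 1} = 1) :
    ∀ t : ℚ_[2], ‖t‖ ≤ (2 : ℝ)⁻¹ →
      (∫ u in {u : ℚ_[2] | ‖u - 2⁻¹‖ ≤ 1}, ψ (-(t * u ^ 2)) ∂μ) = ψ (-(t / 4)) := by
  intro t ht
  have hmeas : MeasurableSet {u : ℚ_[2] | ‖u - 2⁻¹‖ ≤ 1} :=
    (isClosed_le (by continuity) continuous_const).measurableSet
  have hconst : Set.EqOn (fun u => ψ (-(t * u ^ 2))) (fun _ => ψ (-(t / 4)))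
      {u : ℚ_[2] | ‖u - 2⁻¹‖ ≤ 1} := by
    intro u hu
    have h1 : ‖u - 2⁻¹‖ ≤ 1 := hu
    have h2 : ‖u + 2⁻¹‖ ≤ 1 := by
      have e : u + 2⁻¹ = (u - 2⁻¹) + 1 := by ring
      rw [e]
      refine le_trans (Padic.nonarchimedean _ _) (max_le h1 (by simp))
    have key : ψ (-(t * (u ^ 2 - 4⁻¹))) = 1 := by
      apply htriv
      have e : -(t * (u ^ 2 - 4⁻¹)) = -(t * ((u - 2⁻¹) * (u + 2⁻¹))) := by ring
      rw [e, norm_neg, norm_mul, norm_mul]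
      calc ‖t‖ * (‖u - 2⁻¹‖ * ‖u + 2⁻¹‖) ≤ (2:ℝ)⁻¹ * (1 * 1) := by
            apply mul_le_mul ht _ (by positivity) (by positivity)
            rw [one_mul]; exact mul_le_one₀ h1 (norm_nonneg _) h2
        _ = (2:ℝ)⁻¹ := by ring
    have e : -(t * u ^ 2) = -(t / 4) + -(t * (u ^ 2 - 4⁻¹)) := by ring
    simp only []
    rw [e, hhom, key, mul_one]
  rw [setIntegral_congr_fun hmeas hconst, setIntegral_const]
  have hset : {u : ℚ_[2] | ‖u - 2⁻¹‖ ≤ 1}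
      = (fun h => -2⁻¹ + h) ⁻¹' {x : ℚ_[2] | ‖x‖ ≤ 1} := by
    ext u; simp [Set.mem_preimage, neg_add_eq_sub, sub_eq_add_neg, add_comm]
  rw [hset, measureReal_def, measure_preimage_add μ (-2⁻¹) _, hμ]
  simp
end

section
/- Let ψ be an additive character of ℚ₂ of conductor 1 and let μ be the additive Haar measure on ℚ₂ normalized so that μ(ℤ₂) = 1. Then for every t ∈ 2ℤ₂ and every y ∈ ℚ₂, ψ(y²) · ∫_{1/2 + ℤ₂} ψ(2uy) ψ(-t u²) dμ(u) = ψ(-t/4) · 1_{ℤ₂}(y). (This identity expresses that, in the Schrödinger model of the Weil representation, the element x(1)y(t)x(-1) acts on the indicator function of ℤ₂ by the scalar ψ(-t/4).) -/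
open MeasureTheory

private lemma sq_add_self_norm (y : ℚ_[2]) (hy : ‖y‖ ≤ 1) : ‖y^2 + y‖ ≤ (2:ℝ)⁻¹ := by
  obtain ⟨z, hz⟩ : ∃ z : ℤ_[2], (z:ℚ_[2]) = y := ⟨⟨y, hy⟩, rfl⟩
  have h2 : (2 : ℤ_[2]) ∣ z^2 + z := by
    have key : ∀ a : ZMod 2, a^2 + a = 0 := by decide
    have h0 : (PadicInt.toZMod (z^2 + z) : ZMod 2) = 0 := by
      rw [map_add, map_pow]; exact key _
    have hmem : z^2+z ∈ RingHom.ker (PadicInt.toZMod (p := 2)) := h0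
    rw [PadicInt.ker_toZMod, PadicInt.maximalIdeal_eq_span_p, Ideal.mem_span_singleton] at hmem
    exact_mod_cast hmem
  obtain ⟨w, hw⟩ := h2
  have h2n : ‖(2:ℤ_[2])‖ = (2:ℝ)⁻¹ := by
    have := @PadicInt.norm_p 2 _; push_cast at this; simpa using this
  have hnorm : ‖z^2 + z‖ ≤ (2:ℝ)⁻¹ := by
    rw [hw, norm_mul, h2n]
    calc (2:ℝ)⁻¹ * ‖w‖ ≤ (2:ℝ)⁻¹ * 1 :=
          mul_le_mul_of_nonneg_left (PadicInt.norm_le_one w) (by norm_num)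
      _ = (2:ℝ)⁻¹ := mul_one _
  calc ‖y^2 + y‖ = ‖((z^2 + z : ℤ_[2]) : ℚ_[2])‖ := by push_cast [hz]; rfl
    _ = ‖z^2 + z‖ := PadicInt.padic_norm_e_of_padicInt _
    _ ≤ (2:ℝ)⁻¹ := hnorm

private lemma two_norm : ‖(2:ℚ_[2])‖ = (2:ℝ)⁻¹ := by
  have := @Padic.norm_p 2 _
  push_cast at this
  simpa using this

private lemma norm_ge_two (y : ℚ_[2]) (hy : 1 < ‖y‖) : 2 ≤ ‖y‖ := by
  have hy0 : y ≠ 0 := by rintro rfl; norm_num at hy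
  rw [Padic.norm_eq_zpow_neg_valuation hy0] at hy ⊢
  push_cast at hy ⊢
  have h1 : (0:ℤ) < -y.valuation := by
    by_contra h
    push_neg at h
    have : (2:ℝ) ^ (-y.valuation) ≤ 1 := zpow_le_one_of_nonpos₀ (by norm_num) h
    linarith
  calc (2:ℝ) = 2^(1:ℤ) := by norm_num
    _ ≤ 2 ^ (-y.valuation) := zpow_le_zpow_right₀ (by norm_num) h1


/-- Let `ψ` be an additive character of `ℚ₂` of conductor `1` and `μ` the additive
Haar measure with `μ(ℤ₂) = 1`.  Then for every `t ∈ 2ℤ₂` and every `y ∈ ℚ₂`,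
`ψ(y²) · ∫_{1/2 + ℤ₂} ψ(2uy) ψ(-t u²) dμ(u) = ψ(-t/4) · 1_{ℤ₂}(y)`:
in the Schrödinger model of the Weil representation, `x(1)y(t)x(-1)` acts on the
indicator function of `ℤ₂` by the scalar `ψ(-t/4)`. -/
theorem weil_action_on_indicator (ψ : ℚ_[2] → ℂ)
    [MeasurableSpace ℚ_[2]] [BorelSpace ℚ_[2]]
    (hcont : Continuous ψ)
    (hhom : ∀ x y : ℚ_[2], ψ (x + y) = ψ x * ψ y)
    (hcircle : ∀ x : ℚ_[2], ‖ψ x‖ = 1)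
    (htriv : ∀ x : ℚ_[2], ‖x‖ ≤ (2 : ℝ)⁻¹ → ψ x = 1)
    (hnontriv : ∃ x : ℚ_[2], ‖x‖ ≤ 1 ∧ ψ x ≠ 1)
    (μ : Measure ℚ_[2]) [μ.IsAddHaarMeasure]
    (hμ : μ {x : ℚ_[2] | ‖x‖ ≤ 1} = 1) :
    ∀ t : ℚ_[2], ‖t‖ ≤ (2 : ℝ)⁻¹ → ∀ y : ℚ_[2],
      ψ (y ^ 2) * ∫ u in {u : ℚ_[2] | ‖u - 2⁻¹‖ ≤ 1}, ψ (2 * u * y) * ψ (-(t * u ^ 2)) ∂μ =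
        ψ (-(t / 4)) * Set.indicator {x : ℚ_[2] | ‖x‖ ≤ 1} (fun _ => (1 : ℂ)) y := by
  intro t ht y
  set S : Set ℚ_[2] := {x : ℚ_[2] | ‖x‖ ≤ 1} with hS
  have hSmeas : MeasurableSet S :=
    (isClosed_le continuous_norm continuous_const).measurableSet
  -- substitution u = v + 1/2
  have hemb : MeasurableEmbedding (fun v : ℚ_[2] => v + 2⁻¹) :=
    (MeasurableEquiv.addRight (2⁻¹ : ℚ_[2])).measurableEmbedding
  have hmp : MeasurePreserving (fun v : ℚ_[2] => v + 2⁻¹) μ μ :=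
    measurePreserving_add_right μ _
  have hpre : (fun v : ℚ_[2] => v + 2⁻¹) ⁻¹' {u : ℚ_[2] | ‖u - 2⁻¹‖ ≤ 1} = S := by
    ext v; simp [hS]
  have hsub : (∫ u in {u : ℚ_[2] | ‖u - 2⁻¹‖ ≤ 1}, ψ (2*u*y) * ψ (-(t*u^2)) ∂μ)
      = ∫ v in S, ψ (2*(v+2⁻¹)*y) * ψ (-(t*(v+2⁻¹)^2)) ∂μ := by
    rw [← hmp.setIntegral_preimage_emb hemb (fun u => ψ (2*u*y) * ψ (-(t*u^2)))
      {u : ℚ_[2] | ‖u - 2⁻¹‖ ≤ 1}, hpre]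
  -- pointwise simplification on S
  have hpt : Set.EqOn (fun v : ℚ_[2] => ψ (2*(v+2⁻¹)*y) * ψ (-(t*(v+2⁻¹)^2)))
      (fun v : ℚ_[2] => (ψ y * ψ (-(t/4))) * ψ (2*v*y)) S := by
    intro v hv
    have hv1 : ‖v‖ ≤ 1 := hv
    have hvv : ‖v^2 + v‖ ≤ 1 := by
      calc ‖v^2+v‖ ≤ max ‖v^2‖ ‖v‖ := Padic.nonarchimedean _ _
        _ ≤ 1 := by rw [norm_pow]; exact max_le (by nlinarith [norm_nonneg v]) hv1
    have e1 : ψ (2*(v+2⁻¹)*y) = ψ (2*v*y) * ψ y := by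
      rw [show (2:ℚ_[2])*(v+2⁻¹)*y = 2*v*y + y by ring, hhom]
    have hsmall : ‖-(t*(v^2+v))‖ ≤ (2:ℝ)⁻¹ := by
      rw [norm_neg, norm_mul]
      calc ‖t‖ * ‖v^2+v‖ ≤ (2:ℝ)⁻¹ * 1 :=
        mul_le_mul ht hvv (norm_nonneg _) (by norm_num)
        _ = (2:ℝ)⁻¹ := mul_one _
    have e2 : ψ (-(t*(v+2⁻¹)^2)) = ψ (-(t/4)) := by
      rw [show -(t*(v+2⁻¹)^2) = -(t*(v^2+v)) + -(t/4) by ring, hhom, htriv _ hsmall, one_mul]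
    simp only [e1, e2]; ring
  rw [hsub, setIntegral_congr_fun hSmeas hpt, integral_const_mul]
  set I : ℂ := ∫ v in S, ψ (2*v*y) ∂μ with hI
  by_cases hy : ‖y‖ ≤ 1
  · -- y ∈ ℤ₂
    have hone : Set.EqOn (fun v : ℚ_[2] => ψ (2*v*y)) (fun _ => (1:ℂ)) S := by
      intro v hv
      have hv1 : ‖v‖ ≤ 1 := hv
      apply htriv
      rw [norm_mul, norm_mul, two_norm]
      calc (2:ℝ)⁻¹ * ‖v‖ * ‖y‖ ≤ (2:ℝ)⁻¹ * 1 * 1 := by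
            apply mul_le_mul _ hy (norm_nonneg _) (by positivity)
            exact mul_le_mul_of_nonneg_left hv1 (by norm_num)
        _ = (2:ℝ)⁻¹ := by ring
    have hI1 : I = 1 := by
      rw [hI, setIntegral_congr_fun hSmeas hone, setIntegral_const, Measure.real, hμ]
      simp
    have hyS : y ∈ S := hy
    have hψy : ψ (y^2) * ψ y = 1 := by
      rw [← hhom]; exact htriv _ (sq_add_self_norm y hy)
    rw [hI1, Set.indicator_of_mem hyS]
    calc ψ (y^2) * (ψ y * ψ (-(t/4)) * 1) = (ψ (y^2) * ψ y) * ψ (-(t/4)) := by ring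
      _ = ψ (-(t/4)) * 1 := by rw [hψy]; ring
  · -- y ∉ ℤ₂ : the integral I vanishes
    push_neg at hy
    have hy0 : y ≠ 0 := by rintro rfl; norm_num at hy
    obtain ⟨x, hx1, hxne⟩ := hnontriv
    set v₀ : ℚ_[2] := x / (2*y) with hv₀
    have h2y : ‖2*y‖ = (2:ℝ)⁻¹ * ‖y‖ := by rw [norm_mul, two_norm]
    have hv₀1 : ‖v₀‖ ≤ 1 := by
      rw [hv₀, norm_div, h2y]
      have h2le : 2 ≤ ‖y‖ := norm_ge_two y hy
      rw [div_le_one (by positivity)]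
      calc ‖x‖ ≤ 1 := hx1
        _ ≤ (2:ℝ)⁻¹ * ‖y‖ := by linarith
    have hpre₀ : (fun v : ℚ_[2] => v + v₀) ⁻¹' S = S := by
      ext v
      simp only [Set.mem_preimage, hS, Set.mem_setOf_eq]
      constructor
      · intro h
        calc ‖v‖ = ‖(v + v₀) + (-v₀)‖ := by ring_nf
          _ ≤ max ‖v + v₀‖ ‖-v₀‖ := Padic.nonarchimedean _ _
          _ ≤ 1 := max_le h (by rwa [norm_neg])
      · intro h
        calc ‖v + v₀‖ ≤ max ‖v‖ ‖v₀‖ := Padic.nonarchimedean _ _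
          _ ≤ 1 := max_le h hv₀1
    have hemb₀ : MeasurableEmbedding (fun v : ℚ_[2] => v + v₀) :=
      (MeasurableEquiv.addRight v₀).measurableEmbedding
    have htrans : I = ∫ v in S, ψ (2*(v+v₀)*y) ∂μ := by
      rw [hI, ← (measurePreserving_add_right μ v₀).setIntegral_preimage_emb hemb₀
        (fun u => ψ (2*u*y)) S, hpre₀]
    have hψv₀ : ψ (2*v₀*y) = ψ x := by
      congr 1
      rw [hv₀]
      field_simp
    have hIeq : I = I * ψ x := by
      calc I = ∫ v in S, ψ (2*(v+v₀)*y) ∂μ := htrans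
        _ = ∫ v in S, ψ (2*v*y) * ψ (2*v₀*y) ∂μ := by
            apply setIntegral_congr_fun hSmeas
            intro v _
            show ψ (2*(v+v₀)*y) = ψ (2*v*y) * ψ (2*v₀*y)
            rw [show (2:ℚ_[2])*(v+v₀)*y = 2*v*y + 2*v₀*y by ring, hhom]
        _ = I * ψ (2*v₀*y) := by rw [integral_mul_const, hI]
        _ = I * ψ x := by rw [hψv₀]
    have hI0 : I = 0 := by
      have hz : I * (1 - ψ x) = 0 := by
        rw [mul_sub, ← hIeq]; ring
      rcases mul_eq_zero.1 hz with h' | h'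
      · exact h'
      · exact absurd (sub_eq_zero.1 h').symm hxne
    have hyS : y ∉ S := by rw [hS]; simpa using hy.not_ge
    rw [hI0, Set.indicator_of_notMem hyS]
    ring
end

section
/- Let ψ be an additive character of ℚ₂ of conductor 1, let μ be the additive Haar measure on ℚ₂ with μ(ℤ₂) = 1, and let φ : ℚ₂ → ℂ be a locally constant function with compact support. Define the Fourier transform φ̂(y) = ∫_{ℚ₂} ψ(2uy) φ(u) dμ(u). If ψ(2y²) φ(y) = φ(y) for all y ∈ ℚ₂ and ψ(2y²) φ̂(y) = φ̂(y) for all y ∈ ℚ₂, then φ is a scalar multiple of the indicator function of ℤ₂. -/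
open MeasureTheory

lemma q2_norm_two : ‖(2:ℚ_[2])‖ = 2⁻¹ := by
  have : ((2:ℕ):ℚ_[2]) = (2:ℚ_[2]) := by norm_num
  rw [← this, Padic.norm_p]; norm_num

lemma q2_norm_exists (z : ℚ_[2]) (hz : z ≠ 0) : ∃ m : ℤ, ‖z‖ = 2 ^ m := by
  refine ⟨-z.valuation, ?_⟩
  rw [Padic.norm_eq_zpow_neg_valuation hz]; norm_num

lemma q2_norm_gap {z : ℚ_[2]} {m : ℤ} (h : ¬ (‖z‖ ≤ 2 ^ m)) : 2 ^ (m+1) ≤ ‖z‖ := by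
  rcases eq_or_ne z 0 with rfl | hz
  · simp at h; exact absurd h (not_lt.mpr (by positivity))
  · obtain ⟨k, hk⟩ := q2_norm_exists z hz
    rw [hk] at h ⊢
    have hmk : m < k := by
      by_contra hc
      have : (2:ℝ)^k ≤ 2^m := by gcongr <;> [norm_num; omega]
      exact h this
    gcongr <;> [norm_num; omega]

-- residue lemma
lemma q2_unit_residue {x : ℚ_[2]} (hx : ‖x‖ = 1) : ‖x - 1‖ ≤ 2⁻¹ := by
  set z : ℤ_[2] := ⟨x, hx.le⟩ with hzdef
  have key : ‖z - 1‖ ≤ 2⁻¹ := by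
    have hs := PadicInt.appr_spec 1 z
    set a := z.appr 1 with ha
    rcases Nat.even_or_odd a with ⟨b, hb⟩ | ⟨b, hb⟩
    · exfalso
      have hmem : z ∈ Ideal.span {(2:ℤ_[2])^1} := by
        have h2 : ((a:ℤ_[2])) ∈ Ideal.span {(2:ℤ_[2])^1} := by
          rw [hb]; push_cast
          exact Ideal.mem_span_singleton.mpr ⟨b, by ring⟩
        have := Ideal.add_mem _ hs h2
        simpa using this
      have := (PadicInt.norm_le_pow_iff_mem_span_pow z 1).mpr hmem
      have hz1 : ‖z‖ = 1 := by
        rw [hzdef]; exact hx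
      rw [hz1] at this
      norm_num at this
    · have hmem : z - 1 ∈ Ideal.span {(2:ℤ_[2])^1} := by
      -- z - 1 = (z - a) + (a - 1), a - 1 = 2b
        have h2 : ((a:ℤ_[2]) - 1) ∈ Ideal.span {(2:ℤ_[2])^1} := by
          rw [hb]; push_cast
          exact Ideal.mem_span_singleton.mpr ⟨b, by ring⟩
        have := Ideal.add_mem _ hs h2
        simpa using this
      have := (PadicInt.norm_le_pow_iff_mem_span_pow (z-1) 1).mpr hmem
      simpa using this
  have : ((z : ℚ_[2]) - 1) = x - 1 := by rw [hzdef]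
  calc ‖x - 1‖ = ‖z - 1‖ := by rw [← this]; simp [PadicInt.norm_def]
    _ ≤ 2⁻¹ := key

lemma q2_add_eq_max {a b : ℚ_[2]} (h : ‖b‖ < ‖a‖) : ‖a + b‖ = ‖a‖ := by
  have := Padic.add_eq_max_of_ne (q := a) (r := b) (ne_of_gt h)
  rw [this, max_eq_left h.le]
section psi
variable (ψ : ℚ_[2] → ℂ)
variable (hhom : ∀ x y : ℚ_[2], ψ (x + y) = ψ x * ψ y)
variable (htriv : ∀ x : ℚ_[2], ‖x‖ ≤ (2 : ℝ)⁻¹ → ψ x = 1)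

include hhom htriv

lemma psi_nat_mul : ∀ (n : ℕ) (x : ℚ_[2]), ψ ((n:ℚ_[2]) * x) = ψ x ^ n := by
  intro n x
  induction n with
  | zero => simpa using htriv 0 (by norm_num)
  | succ n ih => push_cast; rw [add_mul, one_mul, hhom, ih, pow_succ]

lemma psi_unit (hnontriv : ∃ x : ℚ_[2], ‖x‖ ≤ 1 ∧ ψ x ≠ 1) {u : ℚ_[2]}
    (hu : ‖u‖ = 1) : ψ u = -1 := by
  obtain ⟨x₀, hx1, hx2⟩ := hnontriv
  have hx0 : ‖x₀‖ = 1 := by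
    by_contra h
    have hne : ¬ ‖x₀‖ ≤ (2:ℝ) ^ (-1 : ℤ) := by
      intro hle
      exact hx2 (htriv _ (by rw [show ((2:ℝ)⁻¹) = 2 ^ (-1:ℤ) by norm_num]; exact hle))
    have := q2_norm_gap hne
    simp at this
    exact h (le_antisymm hx1 this)
  have hsq : ψ x₀ * ψ x₀ = 1 := by
    rw [← hhom]
    refine htriv _ ?_
    have : x₀ + x₀ = 2 * x₀ := by ring
    rw [this, norm_mul, q2_norm_two, hx0]; norm_num
  have hneg : ψ x₀ = -1 := (mul_self_eq_one_iff.mp hsq).resolve_left hx2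
  have hdiff : ‖u - x₀‖ ≤ 2⁻¹ := by
    have h1 := q2_unit_residue hu
    have h2 := q2_unit_residue hx0
    have heq : u - x₀ = (u - 1) + -(x₀ - 1) := by ring
    rw [heq]
    refine le_trans (Padic.nonarchimedean _ _) ?_
    rw [norm_neg]
    exact max_le h1 h2
  have hu' : u = x₀ + (u - x₀) := by ring
  rw [hu', hhom, hneg, htriv _ hdiff, mul_one]

lemma psi_ne_one (hnontriv : ∃ x : ℚ_[2], ‖x‖ ≤ 1 ∧ ψ x ≠ 1) {z : ℚ_[2]}
    (hz : (2:ℝ) ≤ ‖z‖) : ψ z ≠ 1 := by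
  intro hone
  have hz0 : z ≠ 0 := by
    intro h; rw [h, norm_zero] at hz; linarith
  obtain ⟨k, hk⟩ := q2_norm_exists z hz0
  have hk1 : 1 ≤ k := by
    by_contra hc
    have : (2:ℝ)^k ≤ 2^(0:ℤ) := by gcongr <;> [norm_num; omega]
    rw [hk] at hz; rw [zpow_zero] at this; linarith
  set j : ℕ := (k-1).toNat with hj
  have hjk : (j:ℤ) = k - 1 := Int.toNat_of_nonneg (by omega)
  set w : ℚ_[2] := (2:ℚ_[2])^j * z with hwdef
  have hw : ‖w‖ = 2 := by
    rw [hwdef, norm_mul, norm_pow, q2_norm_two, hk]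
    have h1 : ((2:ℝ)⁻¹)^j = 2 ^ (-(j:ℤ)) := by
      rw [← zpow_natCast, zpow_neg, inv_zpow]
    rw [h1, ← zpow_add₀ (by norm_num : (2:ℝ) ≠ 0)]
    rw [hjk]
    norm_num
  have hpw : ψ w = 1 := by
    have hcast : w = ((2^j : ℕ) : ℚ_[2]) * z := by rw [hwdef]; push_cast; ring
    rw [hcast, psi_nat_mul ψ hhom htriv, hone, one_pow]
  have h2w : ψ (2 * w) = -1 := by
    refine psi_unit ψ hhom htriv hnontriv ?_
    rw [norm_mul, q2_norm_two, hw]; norm_num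
  have hww : ψ w * ψ w = ψ (2 * w) := by
    rw [← hhom]; ring_nf
  rw [hpw, h2w, mul_one] at hww
  norm_num at hww

end psi
open scoped ENNReal

lemma two_zpow_mono {m n : ℤ} (h : m ≤ n) : (2:ℝ)^m ≤ (2:ℝ)^n := by
  gcongr <;> first | norm_num | omega

def Bset (n : ℤ) : Set ℚ_[2] := {y : ℚ_[2] | ‖y‖ ≤ (2:ℝ)^n}

lemma mem_Bset {y : ℚ_[2]} {n : ℤ} : y ∈ Bset n ↔ ‖y‖ ≤ (2:ℝ)^n := Iff.rfl

lemma Bset_measurable [MeasurableSpace ℚ_[2]] [BorelSpace ℚ_[2]] (n : ℤ) :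
    MeasurableSet (Bset n) := by
  have : Bset n = Metric.closedBall 0 ((2:ℝ)^n) := by
    ext y; simp [Bset, Metric.mem_closedBall, dist_eq_norm]
  rw [this]; exact measurableSet_closedBall

lemma q2_norm_zpow (n : ℤ) : ‖(2:ℚ_[2])^n‖ = (2:ℝ)^(-n) := by
  rw [norm_zpow, q2_norm_two]
  rw [← zpow_neg_one, ← zpow_mul]
  ring_nf

lemma Bset_mono {m n : ℤ} (h : m ≤ n) : Bset m ⊆ Bset n := by
  intro y hy
  rw [mem_Bset] at hy ⊢
  exact le_trans hy (two_zpow_mono h)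

lemma Bset_split (n : ℤ) :
    Bset n = Bset (n-1) ∪ ((fun y => y + -((2:ℚ_[2])^(-n))) ⁻¹' Bset (n-1)) ∧
    Disjoint (Bset (n-1)) ((fun y => y + -((2:ℚ_[2])^(-n))) ⁻¹' Bset (n-1)) := by
  set c : ℚ_[2] := (2:ℚ_[2])^(-n) with hc
  have hcn : ‖c‖ = (2:ℝ)^n := by rw [hc, q2_norm_zpow]; ring_nf
  have hc0 : c ≠ 0 := by
    intro h0; rw [h0, norm_zero] at hcn
    exact (by positivity : (0:ℝ) < 2^n).ne' hcn.symm
  constructor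
  · ext y
    simp only [Set.mem_union, Set.mem_preimage, mem_Bset]
    constructor
    · intro hyn
      by_cases hsm : ‖y‖ ≤ (2:ℝ)^(n-1)
      · exact Or.inl hsm
      · right
        have hge := q2_norm_gap hsm
        have heq : ‖y‖ = (2:ℝ)^n := le_antisymm hyn (by simpa using hge)
        set u : ℚ_[2] := y * c⁻¹ with hu
        have hun : ‖u‖ = 1 := by
          rw [hu, norm_mul, norm_inv, heq, hcn]
          field_simp
        have hyc : y + -c = c * (u - 1) := by
          rw [hu]; field_simp; ring
        rw [hyc, norm_mul, hcn]
        have hres := q2_unit_residue hun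
        have h2 : (2:ℝ)^n * ‖u - 1‖ ≤ (2:ℝ)^n * 2⁻¹ := by gcongr
        refine le_trans h2 (le_of_eq ?_)
        rw [zpow_sub_one₀ (by norm_num : (2:ℝ) ≠ 0)]
    · rintro (h | h)
      · exact le_trans h (two_zpow_mono (by omega))
      · have hy : y = c + (y + -c) := by ring
        rw [hy, q2_add_eq_max (by
          rw [hcn]
          refine lt_of_le_of_lt h ?_
          have := two_zpow_mono (show n-1 ≤ n-1 by omega)
          gcongr
          · norm_num
          · omega), hcn]
  · rw [Set.disjoint_left]
    intro y h1 h2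
    rw [mem_Bset] at h1
    rw [Set.mem_preimage, mem_Bset] at h2
    have hle : ‖c‖ ≤ (2:ℝ)^(n-1) := by
      have heq : c = (y + -c) * (-1) + y := by ring
      rw [heq]
      refine le_trans (Padic.nonarchimedean _ _) (max_le ?_ h1)
      rw [norm_mul]; simpa using h2
    rw [hcn] at hle
    have h21 : (2:ℝ)^(n-1) < 2^n := by
      gcongr
      · norm_num
      · omega
    exact absurd (lt_of_le_of_lt hle h21) (lt_irrefl _)

section meas
variable [MeasurableSpace ℚ_[2]] [BorelSpace ℚ_[2]]
variable (μ : MeasureTheory.Measure ℚ_[2]) [μ.IsAddHaarMeasure]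

lemma Bset_measure_rec (n : ℤ) : μ (Bset n) = 2 * μ (Bset (n-1)) := by
  obtain ⟨hcover, hdisj⟩ := Bset_split n
  rw [hcover, MeasureTheory.measure_union hdisj
      ((Bset_measurable _).preimage (measurable_add_const _)),
    MeasureTheory.measure_preimage_add_right, two_mul]

variable (hμ : μ {x : ℚ_[2] | ‖x‖ ≤ 1} = 1)
include hμ

lemma Bset_measure : ∀ n : ℤ, μ (Bset n) = ENNReal.ofReal ((2:ℝ)^n) := by
  have h0 : μ (Bset 0) = 1 := by
    have : Bset 0 = {x : ℚ_[2] | ‖x‖ ≤ 1} := by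
      ext y; rw [mem_Bset]; norm_num
    rw [this, hμ]
  have hof2 : (2:ℝ≥0∞) = ENNReal.ofReal 2 := by simp
  intro n
  induction n using Int.induction_on with
  | zero => rw [h0]; norm_num
  | succ k ih =>
    have hrec := Bset_measure_rec μ (k+1)
    simp only [add_sub_cancel_right] at hrec
    rw [hrec, ih, hof2, ← ENNReal.ofReal_mul (by norm_num)]
    congr 1
    rw [show ((k:ℤ)+1 : ℤ) = ((k:ℤ)) + 1 by ring, zpow_add_one₀ (by norm_num : (2:ℝ) ≠ 0)]
    ring
  | pred k ih =>
    have hrec := Bset_measure_rec μ (-k)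
    rw [ih] at hrec
    have hx : μ (Bset (-(k:ℤ)-1)) = 2⁻¹ * (2 * μ (Bset (-(k:ℤ)-1))) := by
      rw [← mul_assoc, ENNReal.inv_mul_cancel (by norm_num) (by norm_num), one_mul]
    have hinv : (2:ℝ≥0∞)⁻¹ = ENNReal.ofReal 2⁻¹ := by
      rw [ENNReal.ofReal_inv_of_pos (by norm_num), ← hof2]
    rw [hx, ← hrec, hinv, ← ENNReal.ofReal_mul (by norm_num)]
    congr 1
    rw [zpow_sub_one₀ (by norm_num : (2:ℝ) ≠ 0)]
    ring
lemma Bset_measure_toReal (n : ℤ) : (μ (Bset n)).toReal = (2:ℝ)^n := by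
  rw [Bset_measure μ hμ, ENNReal.toReal_ofReal (by positivity)]

end meas
section charint
open MeasureTheory

lemma Bset_add_mem {N : ℤ} {a b : ℚ_[2]} (ha : a ∈ Bset N) (hb : ‖b‖ ≤ (2:ℝ)^N) :
    a + b ∈ Bset N := by
  rw [mem_Bset] at ha ⊢
  exact le_trans (Padic.nonarchimedean a b) (max_le ha hb)

variable [MeasurableSpace ℚ_[2]] [BorelSpace ℚ_[2]]
variable (ψ : ℚ_[2] → ℂ)
  (hhom : ∀ x y : ℚ_[2], ψ (x + y) = ψ x * ψ y)
  (htriv : ∀ x : ℚ_[2], ‖x‖ ≤ (2 : ℝ)⁻¹ → ψ x = 1)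
  (μ : Measure ℚ_[2]) [μ.IsAddHaarMeasure]

set_option linter.unusedSectionVars false

include hhom htriv

lemma charBall_triv (hμ : μ {x : ℚ_[2] | ‖x‖ ≤ 1} = 1) (N : ℤ) (c : ℚ_[2])
    (h : ‖c‖ * 2^N ≤ 2⁻¹) :
    ∫ y in Bset N, ψ (c * y) ∂μ = (((2:ℝ)^N : ℝ) : ℂ) := by
  have hcongr : ∫ y in Bset N, ψ (c*y) ∂μ = ∫ _y in Bset N, (1:ℂ) ∂μ := by
    refine setIntegral_congr_fun (Bset_measurable N) (fun y hy => htriv _ ?_)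
    rw [mem_Bset] at hy
    rw [norm_mul]
    calc ‖c‖ * ‖y‖ ≤ ‖c‖ * 2^N := by gcongr
      _ ≤ 2⁻¹ := h
  rw [hcongr, setIntegral_const, measureReal_def, Bset_measure_toReal μ hμ]
  simp [Complex.real_smul]

lemma charBall_zero (hnontriv : ∃ x : ℚ_[2], ‖x‖ ≤ 1 ∧ ψ x ≠ 1) (N : ℤ) (c : ℚ_[2])
    (h : 1 ≤ ‖c‖ * 2^N) :
    ∫ y in Bset N, ψ (c * y) ∂μ = 0 := by
  have hc0 : c ≠ 0 := by
    intro h0; rw [h0, norm_zero, zero_mul] at h; linarith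
  have hcpos : 0 < ‖c‖ := norm_pos_iff.mpr hc0
  set y₀ : ℚ_[2] := c⁻¹ with hy₀def
  have hy₀ : ‖y₀‖ ≤ (2:ℝ)^N := by
    rw [hy₀def, norm_inv, ← one_div, div_le_iff₀ hcpos]
    linarith
  have hψy₀ : ψ (c * y₀) = -1 := by
    rw [hy₀def, mul_inv_cancel₀ hc0]
    exact psi_unit ψ hhom htriv hnontriv norm_one
  set f : ℚ_[2] → ℂ := (Bset N).indicator (fun t => ψ (c*t)) with hf
  have hI : ∫ y in Bset N, ψ (c*y) ∂μ = ∫ y, f y ∂μ :=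
    (integral_indicator (Bset_measurable N)).symm
  have hfy : ∀ y, f (y + y₀) = ψ (c*y₀) * f y := by
    intro y
    by_cases hyB : y ∈ Bset N
    · rw [hf]
      rw [Set.indicator_of_mem (Bset_add_mem hyB hy₀), Set.indicator_of_mem hyB]
      show ψ (c * (y + y₀)) = _
      rw [mul_add, hhom, mul_comm]
    · have hyB' : y + y₀ ∉ Bset N := by
        intro hmem
        exact hyB (by
          have := Bset_add_mem hmem (by rw [norm_neg]; exact hy₀)
          simpa using this)
      rw [hf, Set.indicator_of_notMem hyB', Set.indicator_of_notMem hyB, mul_zero]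
  have htrans : ∫ y, f (y + y₀) ∂μ = ∫ y, f y ∂μ := integral_add_right_eq_self f y₀
  have hkey : ∫ y, f y ∂μ = -(∫ y, f y ∂μ) := by
    nth_rewrite 1 [← htrans]
    simp_rw [hfy, hψy₀]
    rw [integral_const_mul]
    ring
  rw [hI]
  exact add_self_eq_zero.mp (by nth_rewrite 2 [hkey]; ring)

end charint
section inversion
open MeasureTheory

variable [MeasurableSpace ℚ_[2]] [BorelSpace ℚ_[2]]
variable (ψ : ℚ_[2] → ℂ) (hcont : Continuous ψ)
  (hhom : ∀ x y : ℚ_[2], ψ (x + y) = ψ x * ψ y)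
  (hcircle : ∀ x : ℚ_[2], ‖ψ x‖ = 1)
  (htriv : ∀ x : ℚ_[2], ‖x‖ ≤ (2 : ℝ)⁻¹ → ψ x = 1)
  (hnontriv : ∃ x : ℚ_[2], ‖x‖ ≤ 1 ∧ ψ x ≠ 1)
  (μ : Measure ℚ_[2]) [μ.IsAddHaarMeasure] (hμ : μ {x : ℚ_[2] | ‖x‖ ≤ 1} = 1)

set_option linter.unusedSectionVars false

lemma Bset_compact (n : ℤ) : IsCompact (Bset n) := by
  have : Bset n = Metric.closedBall 0 ((2:ℝ)^n) := by
    ext y; simp [Bset, Metric.mem_closedBall, dist_eq_norm]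
  rw [this]
  exact isCompact_closedBall 0 _

include hcont hhom hcircle htriv hnontriv hμ in
lemma inversion (h : ℚ_[2] → ℂ) (hlc : IsLocallyConstant h) (hcs : HasCompactSupport h)
    (x : ℚ_[2]) (N : ℕ) (hN : ∀ u : ℚ_[2], ‖u - x‖ ≤ (2:ℝ)^(-(N:ℤ)) → h u = h x) :
    ∫ y in Bset (N:ℤ), ψ (-(2*x*y)) * (∫ u, ψ (2*u*y) * h u ∂μ) ∂μ = h x := by
  have hhc : Continuous h := hlc.continuous
  have two_ne : (2:ℝ) ≠ 0 := by norm_num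
  have hzpow_cancel : (2:ℝ)^(-(N:ℤ)) * (2:ℝ)^((N:ℤ)) = 1 := by
    rw [← zpow_add₀ two_ne]; norm_num
  -- step 1 : pull the constant inside the inner integral
  have hstep1 : ∀ y : ℚ_[2], ψ (-(2*x*y)) * (∫ u, ψ (2*u*y) * h u ∂μ)
      = ∫ u, ψ (2*(u-x)*y) * h u ∂μ := by
    intro y
    rw [← integral_const_mul]
    congr 1
    funext u
    rw [← mul_assoc, ← hhom]
    congr 2
    ring
  rw [setIntegral_congr_fun (Bset_measurable _) (fun y _ => hstep1 y)]
  -- step 2 : Fubini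
  have hcontF : Continuous (fun z : ℚ_[2] × ℚ_[2] => ψ (2*(z.2 - x)*z.1) * h z.2) :=
    (hcont.comp (by fun_prop)).mul (hhc.comp continuous_snd)
  have hBfin : μ (Bset (N:ℤ)) < ⊤ := (Bset_compact (N:ℤ)).measure_lt_top
  have hint1 : Integrable (fun _ : ℚ_[2] => (1:ℝ)) (μ.restrict (Bset (N:ℤ))) := by
    rw [integrable_const_iff]
    right
    exact ⟨by rwa [Measure.restrict_apply_univ]⟩
  have hinth : Integrable (fun u => ‖h u‖) μ :=
    (hhc.integrable_of_hasCompactSupport hcs).norm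
  have hFint : Integrable (Function.uncurry fun y u => ψ (2*(u-x)*y) * h u)
      ((μ.restrict (Bset (N:ℤ))).prod μ) := by
    refine Integrable.mono' (hint1.mul_prod hinth) hcontF.aestronglyMeasurable ?_
    refine Filter.Eventually.of_forall (fun z => ?_)
    rw [Function.uncurry]
    simp only [norm_mul, hcircle, one_mul]
    exact le_of_eq rfl
  rw [integral_integral_swap hFint]
  -- step 3 : evaluate the inner integral
  set D : Set ℚ_[2] := {u : ℚ_[2] | ‖u - x‖ ≤ (2:ℝ)^(-(N:ℤ))} with hD
  have hDpre : D = (fun u => u + (-x)) ⁻¹' Bset (-(N:ℤ)) := by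
    ext u; simp [hD, mem_Bset, sub_eq_add_neg]
  have hDmeas : MeasurableSet D := by
    rw [hDpre]
    exact (Bset_measurable _).preimage (measurable_add_const _)
  have hDmall : μ D = ENNReal.ofReal ((2:ℝ)^(-(N:ℤ))) := by
    rw [hDpre, MeasureTheory.measure_preimage_add_right, Bset_measure μ hμ]
  have hinner : ∀ u : ℚ_[2], (∫ y in Bset (N:ℤ), ψ (2*(u-x)*y) ∂μ)
      = (((2:ℝ)^((N:ℤ)) : ℝ) : ℂ) * D.indicator (fun _ => (1:ℂ)) u := by
    intro u
    by_cases hu : u ∈ D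
    · rw [Set.indicator_of_mem hu, mul_one]
      refine charBall_triv ψ hhom htriv μ hμ (N:ℤ) (2*(u-x)) ?_
      rw [norm_mul, q2_norm_two]
      have hu' : ‖u - x‖ ≤ (2:ℝ)^(-(N:ℤ)) := hu
      calc 2⁻¹ * ‖u-x‖ * 2^((N:ℤ)) ≤ 2⁻¹ * ((2:ℝ)^(-(N:ℤ)) * 2^((N:ℤ))) := by
            rw [mul_assoc]; gcongr
        _ = 2⁻¹ := by rw [hzpow_cancel, mul_one]
    · rw [Set.indicator_of_notMem hu, mul_zero]
      refine charBall_zero ψ hhom htriv μ hnontriv (N:ℤ) (2*(u-x)) ?_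
      have hgap : (2:ℝ)^(-(N:ℤ)+1) ≤ ‖u - x‖ := q2_norm_gap hu
      rw [norm_mul, q2_norm_two]
      have : (2:ℝ)⁻¹ * (2^(-(N:ℤ)+1) * 2^((N:ℤ))) = 1 := by
        rw [← zpow_add₀ two_ne]
        rw [show (-(N:ℤ)+1) + (N:ℤ) = 1 by ring]
        norm_num
      calc (1:ℝ) = 2⁻¹ * (2^(-(N:ℤ)+1) * 2^((N:ℤ))) := this.symm
        _ ≤ 2⁻¹ * ‖u-x‖ * 2^((N:ℤ)) := by rw [mul_assoc]; gcongr
  have hfinal : ∀ u : ℚ_[2], (∫ y in Bset (N:ℤ), ψ (2*(u-x)*y) * h u ∂μ)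
      = (((2:ℝ)^((N:ℤ)) : ℝ) : ℂ) * D.indicator h u := by
    intro u
    rw [integral_mul_const, hinner u]
    by_cases hu : u ∈ D
    · simp [Set.indicator_of_mem hu]
    · simp [Set.indicator_of_notMem hu]
  calc ∫ u, (∫ y in Bset (N:ℤ), ψ (2*(u-x)*y) * h u ∂μ) ∂μ
      = ∫ u, (((2:ℝ)^((N:ℤ)) : ℝ) : ℂ) * D.indicator h u ∂μ :=
        integral_congr_ae (Filter.Eventually.of_forall (fun u => hfinal u))
    _ = (((2:ℝ)^((N:ℤ)) : ℝ) : ℂ) * ∫ u, D.indicator h u ∂μ := integral_const_mul _ _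
    _ = (((2:ℝ)^((N:ℤ)) : ℝ) : ℂ) * ∫ u in D, h u ∂μ := by rw [integral_indicator hDmeas]
    _ = (((2:ℝ)^((N:ℤ)) : ℝ) : ℂ) * ∫ _u in D, h x ∂μ := by
        rw [setIntegral_congr_fun hDmeas (fun u hu => hN u hu)]
    _ = h x := by
        rw [setIntegral_const, measureReal_def, hDmall, ENNReal.toReal_ofReal (by positivity)]
        rw [Complex.real_smul, ← mul_assoc, ← Complex.ofReal_mul,
          show (2:ℝ)^((N:ℤ)) * 2^(-(N:ℤ)) = 1 by rw [mul_comm]; exact hzpow_cancel]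
        norm_num
end inversion
open MeasureTheory

/-- Let `ψ` be an additive character of `ℚ₂` of conductor `1`, `μ` the additive Haar
measure with `μ(ℤ₂) = 1`, and `φ : ℚ₂ → ℂ` a locally constant compactly supported
(i.e. Schwartz) function, with Fourier transform `φ̂ y = ∫ ψ(2uy) φ u dμ(u)`.
If `ψ(2y²) φ y = φ y` and `ψ(2y²) φ̂ y = φ̂ y` for all `y`, then `φ` is a scalar
multiple of the indicator function of `ℤ₂`. -/
theorem invariant_vector_is_indicator (ψ : ℚ_[2] → ℂ)
    [MeasurableSpace ℚ_[2]] [BorelSpace ℚ_[2]]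
    (hcont : Continuous ψ)
    (hhom : ∀ x y : ℚ_[2], ψ (x + y) = ψ x * ψ y)
    (hcircle : ∀ x : ℚ_[2], ‖ψ x‖ = 1)
    (htriv : ∀ x : ℚ_[2], ‖x‖ ≤ (2 : ℝ)⁻¹ → ψ x = 1)
    (hnontriv : ∃ x : ℚ_[2], ‖x‖ ≤ 1 ∧ ψ x ≠ 1)
    (μ : Measure ℚ_[2]) [μ.IsAddHaarMeasure]
    (hμ : μ {x : ℚ_[2] | ‖x‖ ≤ 1} = 1)
    (φ : ℚ_[2] → ℂ) (hlc : IsLocallyConstant φ) (hcs : HasCompactSupport φ)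
    (hx : ∀ y : ℚ_[2], ψ (2 * y ^ 2) * φ y = φ y)
    (hy : ∀ y : ℚ_[2],
      ψ (2 * y ^ 2) * (∫ u, ψ (2 * u * y) * φ u ∂μ) = ∫ u, ψ (2 * u * y) * φ u ∂μ) :
    ∃ a : ℂ, φ = fun y => a * Set.indicator {x : ℚ_[2] | ‖x‖ ≤ 1} (fun _ => (1 : ℂ)) y := by
  set φhat : ℚ_[2] → ℂ := fun y => ∫ u, ψ (2 * u * y) * φ u ∂μ with hφhat
  -- support principle
  have key : ∀ g : ℚ_[2] → ℂ, (∀ y, ψ (2 * y ^ 2) * g y = g y) →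
      ∀ y : ℚ_[2], ¬ (‖y‖ ≤ 1) → g y = 0 := by
    intro g hg y hyn
    have hy2 : (2:ℝ) ≤ ‖y‖ := by
      have hgap := q2_norm_gap (z := y) (m := 0) (by simpa using hyn)
      simpa using hgap
    have hnorm : (2:ℝ) ≤ ‖2 * y ^ 2‖ := by
      rw [norm_mul, q2_norm_two, norm_pow]
      nlinarith [hy2]
    have hne := psi_ne_one ψ hhom htriv hnontriv hnorm
    have hzero : (ψ (2 * y ^ 2) - 1) * g y = 0 := by
      rw [sub_mul, one_mul, hg y, sub_self]
    rcases mul_eq_zero.mp hzero with h | h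
    · exact absurd (sub_eq_zero.mp h) hne
    · exact h
  have hsuppφ : ∀ y : ℚ_[2], ¬ (‖y‖ ≤ 1) → φ y = 0 := key φ hx
  have hsupphat : ∀ y : ℚ_[2], ¬ (‖y‖ ≤ 1) → φhat y = 0 := key φhat hy
  set a : ℂ := ∫ y in Bset 0, φhat y ∂μ with ha
  have hconst : ∀ x : ℚ_[2], ‖x‖ ≤ 1 → φ x = a := by
    intro x hx1
    -- find a radius of local constancy
    obtain ⟨ε, hε, hball⟩ := Metric.isOpen_iff.mp (hlc.isOpen_fiber (φ x)) x rfl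
    obtain ⟨N, hN⟩ := exists_pow_lt_of_lt_one hε (by norm_num : (2:ℝ)⁻¹ < 1)
    have hNloc : ∀ u : ℚ_[2], ‖u - x‖ ≤ (2:ℝ)^(-(N:ℤ)) → φ u = φ x := by
      intro u hu
      have h2 : (2:ℝ)^(-(N:ℤ)) = (2⁻¹:ℝ)^N := by
        rw [inv_pow, ← zpow_natCast, ← zpow_neg]
      refine hball ?_
      rw [Metric.mem_ball, dist_eq_norm]
      exact lt_of_le_of_lt (by rw [← h2] at hN ⊢; exact hu) hN
    have hinv := inversion ψ hcont hhom hcircle htriv hnontriv μ hμ φ hlc hcs x N hNloc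
    have hcongr : ∀ y : ℚ_[2], y ∈ Bset (N:ℤ) →
        ψ (-(2*x*y)) * φhat y = (Bset 0).indicator φhat y := by
      intro y _
      by_cases hy1 : ‖y‖ ≤ 1
      · rw [Set.indicator_of_mem (by rw [mem_Bset]; simpa using hy1)]
        have hone : ψ (-(2*x*y)) = 1 := by
          refine htriv _ ?_
          rw [norm_neg, norm_mul, norm_mul, q2_norm_two]
          calc 2⁻¹ * ‖x‖ * ‖y‖ ≤ 2⁻¹ * 1 * 1 := by gcongr
            _ = 2⁻¹ := by norm_num
        rw [hone, one_mul]
      · rw [Set.indicator_of_notMem (by rw [mem_Bset]; simpa using hy1),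
          hsupphat y hy1, mul_zero]
    rw [setIntegral_congr_fun (Bset_measurable _) hcongr] at hinv
    rw [setIntegral_indicator (Bset_measurable 0),
      Set.inter_eq_right.mpr (Bset_mono (by omega))] at hinv
    rw [← hinv, ha]
  refine ⟨a, funext fun y => ?_⟩
  by_cases hy1 : ‖y‖ ≤ 1
  · rw [Set.indicator_of_mem (by simpa using hy1), mul_one]
    exact hconst y hy1
  · rw [Set.indicator_of_notMem (by simpa using hy1), mul_zero]
    exact hsuppφ y hy1
end

section
/- Let ψ be an additive character of ℚ₂ of conductor 1, let n ≥ 1, and let b be a symmetric n × n matrix with entries in ℚ₂. Then ψ(yᵀ b y) = 1 for all y ∈ ℤ₂ⁿ if and only if every off-diagonal entry of b lies in ℤ₂ and every diagonal entry of b lies in 2ℤ₂. (This computes which operators φ(y) ↦ ψ(yᵀby)φ(y) of the Schrödinger model fix the indicator function of ℤ₂ⁿ, and hence determines the long-root and short-root conditions defining the subgroup J.) -/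
private lemma qct_unit_sub_one (z : ℚ_[2]) (hz : ‖z‖ = 1) : ‖z - 1‖ ≤ (2:ℝ)⁻¹ := by
  set x : ℤ_[2] := ⟨z, hz.le⟩ with hxdef
  have hxn : ‖x‖ = 1 := hz
  have hmem : ∀ w : ℤ_[2], PadicInt.toZMod w = 0 ↔ (2 : ℤ_[2]) ∣ w := by
    intro w
    rw [show (PadicInt.toZMod w = 0) ↔ w ∈ RingHom.ker (PadicInt.toZMod (p := 2)) from
      RingHom.mem_ker.symm, PadicInt.ker_toZMod, PadicInt.maximalIdeal_eq_span_p,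
      Ideal.mem_span_singleton]
    norm_num
  have hx0 : PadicInt.toZMod x ≠ 0 := by
    intro h
    have hd := (hmem x).1 h
    have := (PadicInt.norm_lt_one_iff_dvd x).2 (by exact_mod_cast hd)
    rw [hxn] at this
    exact lt_irrefl _ this
  have hx1 : PadicInt.toZMod x = 1 := by
    have hall : ∀ a : ZMod 2, a = 0 ∨ a = 1 := by decide
    rcases hall (PadicInt.toZMod x) with h | h
    · exact absurd h hx0
    · exact h
  have hdvd : (2 : ℤ_[2]) ∣ (x - 1) := (hmem _).1 (by rw [map_sub, map_one, hx1, sub_self])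
  have hlt : ‖x - 1‖ < 1 := (PadicInt.norm_lt_one_iff_dvd _).2 (by exact_mod_cast hdvd)
  have hle : ‖x - 1‖ ≤ (2:ℝ)⁻¹ := by
    have := (PadicInt.norm_lt_pow_iff_norm_le_pow_sub_one (x - 1) 0).1 (by simpa using hlt)
    simpa using this
  have : ((x - 1 : ℤ_[2]) : ℚ_[2]) = z - 1 := rfl
  rw [← this]
  simpa [PadicInt.norm_def] using hle

private lemma qct_norm_two : ‖(2 : ℚ_[2])‖ = (2:ℝ)⁻¹ := by
  have := @Padic.norm_p 2 ⟨Nat.prime_two⟩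
  simpa using this

private lemma qct_ge_one {t : ℚ_[2]} (ht : ¬ ‖t‖ ≤ (2:ℝ)⁻¹) : 1 ≤ ‖t‖ := by
  by_contra h
  exact ht ((Padic.norm_lt_pow_iff_norm_le_pow_sub_one t 0).1 (by simpa using not_le.1 h) |>.trans
    (le_of_eq (by norm_num)))

private lemma qct_psi_unit (ψ : ℚ_[2] → ℂ)
    (hhom : ∀ x y : ℚ_[2], ψ (x + y) = ψ x * ψ y)
    (htriv : ∀ x : ℚ_[2], ‖x‖ ≤ (2 : ℝ)⁻¹ → ψ x = 1)
    (h1 : ψ 1 = -1) (z : ℚ_[2]) (hz : ‖z‖ = 1) : ψ z = -1 := by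
  have : ψ z = ψ (z - 1) * ψ 1 := by rw [← hhom]; ring_nf
  rw [htriv _ (qct_unit_sub_one z hz), h1, one_mul] at this
  exact this

private lemma qct_psi_one (ψ : ℚ_[2] → ℂ)
    (hhom : ∀ x y : ℚ_[2], ψ (x + y) = ψ x * ψ y)
    (htriv : ∀ x : ℚ_[2], ‖x‖ ≤ (2 : ℝ)⁻¹ → ψ x = 1)
    (hnontriv : ∃ x : ℚ_[2], ‖x‖ ≤ 1 ∧ ψ x ≠ 1) : ψ 1 = -1 := by
  obtain ⟨x, hx1, hx2⟩ := hnontriv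
  have hxnorm : ‖x‖ = 1 := le_antisymm hx1 (qct_ge_one (fun h => hx2 (htriv x h)))
  have hψx : ψ x = ψ (x - 1) * ψ 1 := by rw [← hhom]; ring_nf
  rw [htriv _ (qct_unit_sub_one x hxnorm), one_mul] at hψx
  have hne : ψ 1 ≠ 1 := fun h => hx2 (hψx.trans h)
  have hsq : ψ 1 * ψ 1 = 1 := by
    rw [← hhom]
    exact htriv _ (by rw [show (1:ℚ_[2]) + 1 = 2 by norm_num, qct_norm_two])
  rcases mul_self_eq_one_iff.1 hsq with h | h
  · exact absurd h hne
  · exact h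

private lemma qct_lin_norm (ψ : ℚ_[2] → ℂ)
    (h1 : ψ 1 = -1) (t : ℚ_[2]) (ht : ∀ c : ℚ_[2], ‖c‖ ≤ 1 → ψ (t * c) = 1) :
    ‖t‖ ≤ (2:ℝ)⁻¹ := by
  by_contra h
  have h1le : 1 ≤ ‖t‖ := qct_ge_one h
  have htne : t ≠ 0 := by
    intro h0; rw [h0] at h1le; simp at h1le; linarith
  have hc : ‖t⁻¹‖ ≤ 1 := by
    rw [norm_inv]
    exact inv_le_one_of_one_le₀ h1le
  have := ht t⁻¹ hc
  rw [mul_inv_cancel₀ htne, h1] at this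
  norm_num at this

private lemma qct_contra (ψ : ℚ_[2] → ℂ)
    (hhom : ∀ x y : ℚ_[2], ψ (x + y) = ψ x * ψ y)
    (htriv : ∀ x : ℚ_[2], ‖x‖ ≤ (2 : ℝ)⁻¹ → ψ x = 1)
    (h1 : ψ 1 = -1) (s : ℚ_[2]) (hs : ∀ c : ℚ_[2], ‖c‖ ≤ 1 → ψ (s * (c * c)) = 1)
    (k : ℕ) (hk : ‖s‖ = (2:ℝ) ^ (2 * (k:ℤ))) : False := by
  set c : ℚ_[2] := (2 : ℚ_[2]) ^ ((k:ℤ)) with hcdef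
  have hcn : ‖c‖ = (2:ℝ) ^ (-(k:ℤ)) := by
    have := @Padic.norm_p_zpow 2 ⟨Nat.prime_two⟩ ((k:ℤ))
    simpa [hcdef] using this
  have hcle : ‖c‖ ≤ 1 := by
    rw [hcn]
    exact zpow_le_one_of_nonpos₀ one_le_two (by omega)
  have hunit : ‖s * (c * c)‖ = 1 := by
    rw [norm_mul, norm_mul, hk, hcn, ← zpow_add₀ (two_ne_zero), ← zpow_add₀ (two_ne_zero),
      show 2 * (k:ℤ) + (-(k:ℤ) + -(k:ℤ)) = 0 by ring, zpow_zero]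
  have := qct_psi_unit ψ hhom htriv h1 _ hunit
  rw [hs c hcle] at this
  norm_num at this

private lemma qct_diag_norm (ψ : ℚ_[2] → ℂ)
    (hhom : ∀ x y : ℚ_[2], ψ (x + y) = ψ x * ψ y)
    (htriv : ∀ x : ℚ_[2], ‖x‖ ≤ (2 : ℝ)⁻¹ → ψ x = 1)
    (h1 : ψ 1 = -1) (s : ℚ_[2]) (hs : ∀ c : ℚ_[2], ‖c‖ ≤ 1 → ψ (s * (c * c)) = 1) :
    ‖s‖ ≤ (2:ℝ)⁻¹ := by
  by_contra h
  have h1le : 1 ≤ ‖s‖ := qct_ge_one h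
  have hsne : s ≠ 0 := by intro h0; rw [h0] at h1le; simp at h1le; linarith
  have hv : ‖s‖ = (2:ℝ) ^ (-s.valuation) := by
    have := Padic.norm_eq_zpow_neg_valuation hsne
    simpa using this
  set v := s.valuation with hvdef
  have hvle : v ≤ 0 := by
    by_contra hv0
    have hlt : ‖s‖ < 1 := by
      rw [hv, show (1:ℝ) = (2:ℝ) ^ (0:ℤ) by norm_num]
      exact zpow_lt_zpow_right₀ one_lt_two (by omega)
    linarith
  have hs2 : ∀ c : ℚ_[2], ‖c‖ ≤ 1 → ψ ((2*s) * (c*c)) = 1 := by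
    intro c hc
    have h2c : ‖(2:ℚ_[2])*c‖ ≤ 1 := by
      rw [norm_mul, qct_norm_two]
      nlinarith [norm_nonneg c]
    have h4 := hs _ h2c
    have he : s * (((2:ℚ_[2])*c) * ((2:ℚ_[2])*c)) = (s*(c*c) + s*(c*c)) + (2*s)*(c*c) := by ring
    rw [he, hhom, hhom, hs c hc] at h4
    simpa using h4
  rcases Int.even_or_odd v with ⟨m, hm⟩ | ⟨m, hm⟩
  · apply qct_contra ψ hhom htriv h1 s hs (-m).toNat
    rw [hv, hm]
    congr 1
    omega
  · apply qct_contra ψ hhom htriv h1 (2*s) hs2 (-(m+1)).toNat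
    rw [norm_mul, qct_norm_two, hv, hm,
      show (2:ℝ)⁻¹ = (2:ℝ)^(-1:ℤ) by norm_num, ← zpow_add₀ two_ne_zero]
    congr 1
    omega

/-- Let `ψ` be an additive character of `ℚ₂` of conductor `1`, `n ≥ 1`, and `b` a
symmetric `n × n` matrix over `ℚ₂`.  Then `ψ(yᵀ b y) = 1` for all `y ∈ ℤ₂ⁿ` if and
only if every off-diagonal entry of `b` lies in `ℤ₂` and every diagonal entry lies
in `2ℤ₂`.  (This determines which operators `φ(y) ↦ ψ(yᵀby)φ(y)` of the Schrödinger
model fix the indicator function of `ℤ₂ⁿ`, hence the conditions defining `J`.) -/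
theorem quadratic_character_trivial_iff (ψ : ℚ_[2] → ℂ)
    (hcont : Continuous ψ)
    (hhom : ∀ x y : ℚ_[2], ψ (x + y) = ψ x * ψ y)
    (hcircle : ∀ x : ℚ_[2], ‖ψ x‖ = 1)
    (htriv : ∀ x : ℚ_[2], ‖x‖ ≤ (2 : ℝ)⁻¹ → ψ x = 1)
    (hnontriv : ∃ x : ℚ_[2], ‖x‖ ≤ 1 ∧ ψ x ≠ 1)
    (n : ℕ) (hn : 1 ≤ n)
    (b : Matrix (Fin n) (Fin n) ℚ_[2]) (hb : b.IsSymm) :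
    (∀ y : Fin n → ℚ_[2], (∀ i, ‖y i‖ ≤ 1) →
        ψ (∑ i, ∑ j, b i j * y i * y j) = 1) ↔
      ((∀ i j, i ≠ j → ‖b i j‖ ≤ 1) ∧ ∀ i, ‖b i i‖ ≤ (2 : ℝ)⁻¹) := by
  have h1 : ψ 1 = -1 := qct_psi_one ψ hhom htriv hnontriv
  constructor
  · intro H
    -- diagonal entries first
    have hsingle : ∀ (i : Fin n) (c : ℚ_[2]), ‖c‖ ≤ 1 →
        ψ (b i i * (c * c)) = 1 := by
      intro i c hc
      have hy : ∀ k, ‖(Pi.single i c : Fin n → ℚ_[2]) k‖ ≤ 1 := by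
        intro k
        rw [Pi.single_apply]
        split
        · exact hc
        · simp
      have := H _ hy
      have heval : (∑ k, ∑ l, b k l * (Pi.single i c : Fin n → ℚ_[2]) k
          * (Pi.single i c : Fin n → ℚ_[2]) l) = b i i * (c * c) := by
        simp [Pi.single_apply, ite_mul, mul_ite, Finset.sum_ite_eq, Finset.sum_ite_eq']
        ring
      rwa [heval] at this
    have hdiag : ∀ i, ‖b i i‖ ≤ (2:ℝ)⁻¹ := fun i =>
      qct_diag_norm ψ hhom htriv h1 _ (hsingle i)
    refine ⟨?_, hdiag⟩
    intro i j hij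
    have hkey : ∀ c : ℚ_[2], ‖c‖ ≤ 1 → ψ ((2 * b i j) * c) = 1 := by
      intro c hc
      set y : Fin n → ℚ_[2] := Pi.single i 1 + Pi.single j c with hydef
      have hy : ∀ k, ‖y k‖ ≤ 1 := by
        intro k
        have : y k = (if k = i then (1:ℚ_[2]) else 0) + (if k = j then c else 0) := by
          simp [hydef, Pi.single_apply]
        rw [this]
        refine le_trans (Padic.nonarchimedean _ _) (max_le ?_ ?_) <;> split <;>
          simp_all
      have := H y hy
      have heval : (∑ k, ∑ l, b k l * y k * y l)
          = (b i i * ((1:ℚ_[2]) * 1) + b j j * (c * c)) + (2 * b i j) * c := by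
        have hsym : b j i = b i j := hb.apply i j
        simp [hydef, Pi.single_apply, ite_mul, mul_ite, mul_add, add_mul,
          Finset.sum_add_distrib, Finset.sum_ite_eq, Finset.sum_ite_eq', hij, hij.symm, hsym]
        ring
      rw [heval, hhom, hhom, hsingle i 1 (by norm_num), hsingle j c hc] at this
      simpa using this
    have := qct_lin_norm ψ h1 _ hkey
    rw [norm_mul, qct_norm_two] at this
    linarith [norm_nonneg (b i j)]
  · rintro ⟨hod, hd⟩ y hy
    refine htriv _ ?_
    have hsplit : (∑ i, ∑ j, b i j * y i * y j)
        = (∑ i, b i i * y i * y i)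
          + ∑ i, ∑ j ∈ Finset.Ioi i, (b i j * y i * y j + b j i * y j * y i) := by
      rw [Finset.sum_sum_Ioi_add_eq_sum_sum_off_diag (fun j i => b i j * y i * y j)]
      rw [← Finset.sum_add_distrib]
      refine Finset.sum_congr rfl fun i _ => ?_
      rw [← Finset.sum_add_sum_compl {i} (fun j => b i j * y i * y j), Finset.sum_singleton]
    rw [hsplit]
    refine le_trans (Padic.nonarchimedean _ _) (max_le ?_ ?_)
    · refine IsUltrametricDist.norm_sum_le_of_forall_le_of_nonneg (by norm_num) fun i _ => ?_
      rw [norm_mul, norm_mul]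
      calc ‖b i i‖ * ‖y i‖ * ‖y i‖ ≤ 2⁻¹ * 1 * 1 := by
            gcongr <;> [exact hd i; exact hy i; exact hy i]
        _ = 2⁻¹ := by norm_num
    · refine IsUltrametricDist.norm_sum_le_of_forall_le_of_nonneg (by norm_num) fun i _ => ?_
      refine IsUltrametricDist.norm_sum_le_of_forall_le_of_nonneg (by norm_num) fun j hj => ?_
      have hij : i ≠ j := (Finset.mem_Ioi.1 hj).ne
      have he : b i j * y i * y j + b j i * y j * y i = 2 * b i j * y i * y j := by
        rw [hb.apply i j]; ring
      rw [he, norm_mul, norm_mul, norm_mul, qct_norm_two]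
      calc 2⁻¹ * ‖b i j‖ * ‖y i‖ * ‖y j‖ ≤ 2⁻¹ * 1 * 1 * 1 := by
            gcongr <;> [exact hod i j hij; exact hy i; exact hy j]
        _ = 2⁻¹ := by norm_num
end

section
/- Let G be a profinite group, H an open subgroup of G, μ the Haar measure on G normalized so that μ(H) = 1, and χ : H → ℂˣ a continuous group homomorphism. Let U = { φ : G → ℂ : φ(hx) = χ(h)φ(x) for all h ∈ H, x ∈ G }, a complex vector space of dimension [G : H] on which G acts by right translation (g·φ)(x) = φ(xg). Let 𝓗 = { f : G → ℂ : f locally constant, f(h₁ x h₂) = χ(h₁) f(x) χ(h₂) for all h₁, h₂ ∈ H, x ∈ G }, an associative ℂ-algebra under convolution (f ⋆ f')(y) = ∫_G f(x) f'(x⁻¹ y) dμ(x), with identity element χ̇ (the extension of χ by 0 to G). Then the map Θ sending f ∈ 𝓗 to the linear endomorphism φ ↦ f ⋆ φ of U is an isomorphism of ℂ-algebras from 𝓗 onto the algebra End_G(U) of G-equivariant linear endomorphisms of U. Moreover, every f ∈ 𝓗 that vanishes identically on H acts on U as a trace-zero linear endomorphism. -/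
open MeasureTheory
open scoped Pointwise

/-- Convolution of functions on `G` with respect to the measure `μ`:
`(f ⋆ f')(y) = ∫_G f(x) f'(x⁻¹ y) dμ(x)`. -/
noncomputable def heckeConv {G : Type*} [Group G] [MeasurableSpace G]
    (μ : Measure G) (f f' : G → ℂ) : G → ℂ :=
  fun y => ∫ x, f x * f' (x⁻¹ * y) ∂μ

/-- The χ-spherical Hecke algebra (as a set of functions):
locally constant `f : G → ℂ` with `f(h₁ x h₂) = χ(h₁) f(x) χ(h₂)` for `h₁, h₂ ∈ H`. -/
def heckeSet {G : Type*} [Group G] [TopologicalSpace G]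
    (H : Subgroup G) (χ : H →* ℂˣ) : Set (G → ℂ) :=
  {f | IsLocallyConstant f ∧
    ∀ (h₁ h₂ : H) (x : G), f (↑h₁ * x * ↑h₂) = (χ h₁ : ℂ) * f x * (χ h₂ : ℂ)}

/-- The space `U = { φ : G → ℂ | φ(hx) = χ(h) φ(x) for h ∈ H }` of the induced
representation, as a `ℂ`-subspace of `G → ℂ`; `G` acts on it by right translation. -/
noncomputable def inducedSubspace {G : Type*} [Group G]
    (H : Subgroup G) (χ : H →* ℂˣ) : Submodule ℂ (G → ℂ) where
  carrier := {φ | ∀ (h : H) (x : G), φ (↑h * x) = (χ h : ℂ) * φ x}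
  add_mem' := by
    intro a b ha hb h x
    simp only [Set.mem_setOf_eq] at *
    simp [ha h x, hb h x]; ring
  zero_mem' := by intro h x; simp
  smul_mem' := by
    intro c a ha h x
    simp only [Set.mem_setOf_eq] at *
    simp [ha h x]; ring

open scoped Classical in
/-- The extension `χ̇` of `χ` by `0` to all of `G`. -/
noncomputable def chiDot {G : Type*} [Group G]
    (H : Subgroup G) (χ : H →* ℂˣ) : G → ℂ :=
  fun x => if hx : x ∈ H then (χ ⟨x, hx⟩ : ℂ) else 0

namespace HeckeProof

set_option linter.unusedSectionVars false

variable {G : Type*} [Group G] [TopologicalSpace G] [IsTopologicalGroup G]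
  [CompactSpace G] [T2Space G] [TotallyDisconnectedSpace G]
  [MeasurableSpace G] [BorelSpace G]
  (μ : Measure G) [μ.IsHaarMeasure]
  (H : Subgroup G) (hHopen : IsOpen (H : Set G)) (hμH : μ (H : Set G) = 1)
  (χ : H →* ℂˣ)

theorem mem_induced_iff (φ : G → ℂ) :
    φ ∈ inducedSubspace H χ ↔ ∀ (h : H) (x : G), φ (↑h * x) = (χ h : ℂ) * φ x :=
  Iff.rfl

theorem chi_mul_chi_inv (h : H) : (χ h : ℂ) * (χ h⁻¹ : ℂ) = 1 := by
  rw [← Units.val_mul, ← map_mul]; simp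

theorem chiDot_mem_H {x : G} (hx : x ∈ H) : chiDot H χ x = (χ ⟨x, hx⟩ : ℂ) := dif_pos hx

theorem chiDot_not_mem {x : G} (hx : x ∉ H) : chiDot H χ x = 0 := dif_neg hx

theorem chiDot_one : chiDot H χ 1 = 1 := by
  rw [chiDot_mem_H H χ H.one_mem]
  have : (⟨(1:G), H.one_mem⟩ : H) = 1 := rfl
  rw [this, map_one, Units.val_one]

theorem chiDot_left (h : H) (x : G) :
    chiDot H χ (↑h * x) = (χ h : ℂ) * chiDot H χ x := by
  by_cases hx : x ∈ H
  · have hhx : (↑h * x : G) ∈ H := H.mul_mem h.2 hx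
    rw [chiDot_mem_H H χ hx, chiDot_mem_H H χ hhx]
    have : (⟨↑h * x, hhx⟩ : H) = h * ⟨x, hx⟩ := rfl
    rw [this, map_mul, Units.val_mul]
  · have hnx : (↑h * x : G) ∉ H := fun hc => hx (by simpa using H.mul_mem (H.inv_mem h.2) hc)
    rw [chiDot_not_mem H χ hx, chiDot_not_mem H χ hnx, mul_zero]

theorem chiDot_right (x : G) (h : H) :
    chiDot H χ (x * ↑h) = chiDot H χ x * (χ h : ℂ) := by
  by_cases hx : x ∈ H
  · have hhx : (x * ↑h : G) ∈ H := H.mul_mem hx h.2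
    rw [chiDot_mem_H H χ hx, chiDot_mem_H H χ hhx]
    have : (⟨x * ↑h, hhx⟩ : H) = ⟨x, hx⟩ * h := rfl
    rw [this, map_mul, Units.val_mul]
  · have hnx : (x * ↑h : G) ∉ H := fun hc => hx (by simpa using H.mul_mem hc (H.inv_mem h.2))
    rw [chiDot_not_mem H χ hx, chiDot_not_mem H χ hnx, zero_mul]

theorem chiDot_mem_induced : chiDot H χ ∈ inducedSubspace H χ :=
  fun h x => chiDot_left H χ h x

-- quotient infrastructure
theorem mem_coset_iff (q : G ⧸ H) (x : G) :
    x ∈ (q.out : G) • (H : Set G) ↔ QuotientGroup.mk x = q := by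
  rw [mem_leftCoset_iff]
  constructor
  · intro h
    rw [← QuotientGroup.out_eq' q]
    exact (QuotientGroup.eq.2 h).symm
  · intro h
    rw [← QuotientGroup.out_eq' q] at h
    exact QuotientGroup.eq.1 h.symm

include hHopen hμH in
theorem integral_eq_sum [Fintype (G ⧸ H)] (g : G → ℂ)
    (hg : ∀ (x : G), ∀ h ∈ H, g (x * h) = g x) :
    ∫ x, g x ∂μ = ∑ q : G ⧸ H, g q.out := by
  classical
  have hcoset_open : ∀ q : G ⧸ H, IsOpen ((q.out : G) • (H : Set G)) :=
    fun q => hHopen.smul _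
  have hpt : g = fun x => ∑ q : G ⧸ H,
      Set.indicator ((q.out : G) • (H : Set G)) (fun _ => g q.out) x := by
    funext x
    rw [Finset.sum_eq_single (QuotientGroup.mk x : G ⧸ H)]
    · rw [Set.indicator_of_mem ((mem_coset_iff H _ x).2 rfl)]
      have hx : (QuotientGroup.mk x : G ⧸ H).out⁻¹ * x ∈ H := by
        have := (mem_coset_iff H (QuotientGroup.mk x) x).2 rfl
        rwa [mem_leftCoset_iff] at this
      have : g x = g ((QuotientGroup.mk x : G ⧸ H).out *
          ((QuotientGroup.mk x : G ⧸ H).out⁻¹ * x)) := by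
        rw [mul_inv_cancel_left]
      rw [this, hg _ _ hx]
    · intro q _ hq
      rw [Set.indicator_of_notMem]
      rw [mem_coset_iff]
      exact fun h => hq h.symm
    · intro h; exact absurd (Finset.mem_univ _) h
  conv_lhs => rw [hpt]
  rw [integral_finset_sum]
  · refine Finset.sum_congr rfl (fun q _ => ?_)
    rw [integral_indicator_const _ (hcoset_open q).measurableSet]
    have : μ ((q.out : G) • (H : Set G)) = 1 := by rw [measure_smul, hμH]
    rw [measureReal_def, this]; simp
  · intro q _
    exact (integrable_const _).indicator (hcoset_open q).measurableSet

include hHopen hμH in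
/-- The fundamental sum formula for convolutions. -/
theorem conv_eq_sum [Fintype (G ⧸ H)] (f φ : G → ℂ)
    (hf : ∀ (x : G) (h : H), f (x * ↑h) = f x * (χ h : ℂ))
    (hφ : ∀ (h : H) (x : G), φ (↑h * x) = (χ h : ℂ) * φ x) (y : G) :
    heckeConv μ f φ y = ∑ q : G ⧸ H, f q.out * φ (q.out⁻¹ * y) := by
  have := integral_eq_sum μ H hHopen hμH (fun x => f x * φ (x⁻¹ * y)) ?_
  · exact this
  · intro x h hh
    show f (x * h) * φ ((x * h)⁻¹ * y) = f x * φ (x⁻¹ * y)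
    have h1 : (x * h)⁻¹ * y = ((⟨h, hh⟩ : H)⁻¹ : H) * (x⁻¹ * y) := by
      simp [mul_inv_rev, mul_assoc]
    have h2' : f (x * h) = f x * (χ ⟨h, hh⟩ : ℂ) := hf x ⟨h, hh⟩
    rw [h2', h1, hφ (⟨h, hh⟩ : H)⁻¹ (x⁻¹ * y)]
    have h2 := chi_mul_chi_inv H χ (⟨h, hh⟩ : H)
    calc f x * (χ ⟨h, hh⟩ : ℂ) * ((χ (⟨h, hh⟩ : H)⁻¹ : ℂ) * φ (x⁻¹ * y))
        = f x * φ (x⁻¹ * y) * ((χ ⟨h, hh⟩ : ℂ) * (χ (⟨h, hh⟩ : H)⁻¹ : ℂ)) := by ring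
      _ = f x * φ (x⁻¹ * y) := by rw [h2, mul_one]

/-- Reindexing lemma. -/
theorem sum_reindex [Fintype (G ⧸ H)] (ψ φ : G → ℂ)
    (hψ : ∀ (x : G) (h : H), ψ (x * ↑h) = ψ x * (χ h : ℂ))
    (hφ : ∀ (h : H) (x : G), φ (↑h * x) = (χ h : ℂ) * φ x) (g y : G) :
    ∑ q : G ⧸ H, ψ (g * q.out) * φ (q.out⁻¹ * y)
      = ∑ q : G ⧸ H, ψ q.out * φ (q.out⁻¹ * (g * y)) := by
  refine Finset.sum_bijective (fun q => g • q) (MulAction.bijective g)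
    (by simp) (fun q _ => ?_)
  set r := (q.out : G)
  set s := ((g • q).out : G) with hs
  have hmem : s⁻¹ * (g * r) ∈ H := by
    apply QuotientGroup.eq.1
    rw [QuotientGroup.out_eq']
    have : (QuotientGroup.mk (g * r) : G ⧸ H) = g • q := by
      have := MulAction.Quotient.mk_smul_out H g q
      simpa [smul_eq_mul] using this
    exact this.symm
  set h : H := ⟨s⁻¹ * (g * r), hmem⟩ with hh
  have hgr : g * r = s * ↑h := by simp [hh, mul_assoc]
  have hψ1 : ψ (g * r) = ψ s * (χ h : ℂ) := by rw [hgr, hψ]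
  have hinv : s⁻¹ * (g * y) = ↑h * (r⁻¹ * y) := by
    have : (↑h : G) * r⁻¹ = s⁻¹ * g := by
      simp [hh, mul_assoc]
    calc s⁻¹ * (g * y) = (s⁻¹ * g) * y := by rw [mul_assoc]
      _ = (↑h * r⁻¹) * y := by rw [this]
      _ = ↑h * (r⁻¹ * y) := by rw [mul_assoc]
  have hφ1 : φ (s⁻¹ * (g * y)) = (χ h : ℂ) * φ (r⁻¹ * y) := by rw [hinv, hφ]
  rw [hψ1, hφ1]
  ring

theorem conv_left (f φ : G → ℂ)
    (hfL : ∀ (h : H) (x : G), f (↑h * x) = (χ h : ℂ) * f x) (h : H) (x : G) :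
    heckeConv μ f φ (↑h * x) = (χ h : ℂ) * heckeConv μ f φ x := by
  show ∫ z, f z * φ (z⁻¹ * (↑h * x)) ∂μ = (χ h : ℂ) * ∫ z, f z * φ (z⁻¹ * x) ∂μ
  have step : ∫ z, f z * φ (z⁻¹ * (↑h * x)) ∂μ
      = ∫ z, f (↑h * z) * φ ((↑h * z)⁻¹ * (↑h * x)) ∂μ :=
    (integral_mul_left_eq_self (fun z => f z * φ (z⁻¹ * (↑h * x))) ↑h).symm
  rw [step]
  have heq : (fun z => f (↑h * z) * φ ((↑h * z)⁻¹ * (↑h * x)))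
      = fun z => (χ h : ℂ) * (f z * φ (z⁻¹ * x)) := by
    funext z
    have e : (↑h * z)⁻¹ * (↑h * x) = z⁻¹ * x := by group
    rw [hfL h z, e]; ring
  rw [heq, integral_const_mul]

theorem conv_mem_induced (f φ : G → ℂ)
    (hfL : ∀ (h : H) (x : G), f (↑h * x) = (χ h : ℂ) * f x) :
    heckeConv μ f φ ∈ inducedSubspace H χ :=
  fun h x => conv_left μ H χ f φ hfL h x

include hHopen hμH in
theorem conv_right [Fintype (G ⧸ H)] (f φ : G → ℂ)
    (hf : ∀ (x : G) (h : H), f (x * ↑h) = f x * (χ h : ℂ))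
    (hφL : ∀ (h : H) (x : G), φ (↑h * x) = (χ h : ℂ) * φ x)
    (hφR : ∀ (x : G) (h : H), φ (x * ↑h) = φ x * (χ h : ℂ))
    (x : G) (h : H) :
    heckeConv μ f φ (x * ↑h) = heckeConv μ f φ x * (χ h : ℂ) := by
  rw [conv_eq_sum μ H hHopen hμH χ f φ hf hφL, conv_eq_sum μ H hHopen hμH χ f φ hf hφL,
    Finset.sum_mul]
  refine Finset.sum_congr rfl (fun q _ => ?_)
  rw [← mul_assoc, hφR (q.out⁻¹ * x) h]
  ring

-- heckeSet helpers
theorem hecke_left {f : G → ℂ} (hf : f ∈ heckeSet H χ) (h : H) (x : G) :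
    f (↑h * x) = (χ h : ℂ) * f x := by
  have := hf.2 h 1 x
  simpa using this

theorem hecke_right {f : G → ℂ} (hf : f ∈ heckeSet H χ) (x : G) (h : H) :
    f (x * ↑h) = f x * (χ h : ℂ) := by
  have := hf.2 1 h x
  simpa using this

omit [MeasurableSpace G] [BorelSpace G] in
theorem exists_openSubgroup_sub {U : Set G} (hU : IsOpen U) (h1 : (1:G) ∈ U) :
    ∃ K : Subgroup G, IsOpen (K : Set G) ∧ (K : Set G) ⊆ U := by
  obtain ⟨W, hW, hW1, hWU⟩ := compact_exists_isClopen_in_isOpen hU h1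
  obtain ⟨K, hK⟩ := IsTopologicalGroup.exist_openSubgroup_sub_clopen_nhds_of_one hW hW1
  exact ⟨K.toSubgroup, K.isOpen, hK.trans hWU⟩

theorem isLocallyConstant_of_invariant {g : G → ℂ} {S : Set G} (hS : IsOpen S)
    (h1 : (1:G) ∈ S) (hinv : ∀ x, ∀ s ∈ S, g (x * s) = g x) : IsLocallyConstant g := by
  rw [IsLocallyConstant.iff_exists_open]
  intro x
  refine ⟨(fun y => x⁻¹ * y) ⁻¹' S, (continuous_const.mul continuous_id).isOpen_preimage S hS,
    by simpa using h1, fun y hy => ?_⟩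
  have : y = x * (x⁻¹ * y) := by group
  rw [this, hinv x _ hy]

theorem exists_uniform_invariance {g : G → ℂ} (hg : IsLocallyConstant g) :
    ∃ S : Set G, IsOpen S ∧ (1:G) ∈ S ∧ ∀ x, ∀ s ∈ S, g (x * s) = g x := by
  have key : ∀ y : G, ∃ K : Subgroup G, IsOpen (K : Set G) ∧ ∀ k ∈ K, g (y * k) = g y := by
    intro y
    obtain ⟨U, hUopen, hyU, hUc⟩ := (IsLocallyConstant.iff_exists_open g).1 hg y
    obtain ⟨K, hKopen, hKsub⟩ := exists_openSubgroup_sub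
      (U := (fun z => y * z) ⁻¹' U)
      ((continuous_const.mul continuous_id).isOpen_preimage U hUopen) (by simpa using hyU)
    exact ⟨K, hKopen, fun k hk => hUc _ (hKsub hk)⟩
  choose K hKopen hKconst using key
  have hcover : (Set.univ : Set G) ⊆ ⋃ y : G, y • (K y : Set G) := by
    intro x _
    exact Set.mem_iUnion.2 ⟨x, ⟨1, (K x).one_mem, by simp⟩⟩
  obtain ⟨t, ht⟩ := CompactSpace.isCompact_univ.elim_finite_subcover
    (fun y : G => y • (K y : Set G))
    (fun y => (hKopen y).smul y) hcover
  refine ⟨⋂ y ∈ t, (K y : Set G), isOpen_biInter_finset (fun y _ => hKopen y),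
    Set.mem_iInter₂.2 (fun y _ => (K y).one_mem), ?_⟩
  intro x s hs
  obtain ⟨y, hyt, hxy⟩ := Set.mem_iUnion₂.1 (ht (Set.mem_univ x))
  obtain ⟨k, hk, hxk⟩ := hxy
  have hsK : s ∈ K y := Set.mem_iInter₂.1 hs y hyt
  have h1 : g (x * s) = g y := by
    have : x * s = y * (k * s) := by rw [← hxk]; simp [smul_eq_mul, mul_assoc]
    rw [this, hKconst y _ ((K y).mul_mem hk hsK)]
  have h2 : g x = g y := by
    rw [← hxk]; exact hKconst y _ hk
  rw [h1, h2]

include hHopen hμH in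
/-- The Hecke set is closed under convolution. -/
theorem conv_mem_hecke [Fintype (G ⧸ H)] {f f' : G → ℂ}
    (hf : f ∈ heckeSet H χ) (hf' : f' ∈ heckeSet H χ) :
    heckeConv μ f f' ∈ heckeSet H χ := by
  constructor
  · -- locally constant
    obtain ⟨S, hSopen, hS1, hSinv⟩ := exists_uniform_invariance hf'.1
    refine isLocallyConstant_of_invariant hSopen hS1 (fun y s hs => ?_)
    rw [conv_eq_sum μ H hHopen hμH χ f f' (hecke_right H χ hf) (hecke_left H χ hf'),
      conv_eq_sum μ H hHopen hμH χ f f' (hecke_right H χ hf) (hecke_left H χ hf')]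
    refine Finset.sum_congr rfl (fun q _ => ?_)
    have : q.out⁻¹ * (y * s) = (q.out⁻¹ * y) * s := by rw [mul_assoc]
    rw [this, hSinv (q.out⁻¹ * y) s hs]
  · intro h₁ h₂ x
    have e : (↑h₁ * x * ↑h₂ : G) = ↑h₁ * (x * ↑h₂) := by rw [mul_assoc]
    rw [e, conv_left μ H χ f f' (hecke_left H χ hf) h₁ (x * ↑h₂),
      conv_right μ H hHopen hμH χ f f' (hecke_right H χ hf) (hecke_left H χ hf')
        (hecke_right H χ hf') x h₂]
    ring

include hHopen hμH in
/-- Linearity of convolution in the first argument. -/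
theorem conv_add_smul [Fintype (G ⧸ H)] {f f' : G → ℂ}
    (hf : f ∈ heckeSet H χ) (hf' : f' ∈ heckeSet H χ) (c : ℂ) {φ : G → ℂ}
    (hφ : φ ∈ inducedSubspace H χ) :
    heckeConv μ (c • f + f') φ = c • heckeConv μ f φ + heckeConv μ f' φ := by
  funext y
  have hsum : ∀ (x : G) (h : H), (c • f + f') (x * ↑h) = (c • f + f') x * (χ h : ℂ) := by
    intro x h
    simp only [Pi.add_apply, Pi.smul_apply, smul_eq_mul]
    rw [hecke_right H χ hf, hecke_right H χ hf']
    ring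
  rw [conv_eq_sum μ H hHopen hμH χ _ φ hsum hφ]
  simp only [Pi.add_apply, Pi.smul_apply, smul_eq_mul]
  rw [conv_eq_sum μ H hHopen hμH χ f φ (hecke_right H χ hf) hφ,
    conv_eq_sum μ H hHopen hμH χ f' φ (hecke_right H χ hf') hφ,
    Finset.mul_sum, ← Finset.sum_add_distrib]
  refine Finset.sum_congr rfl (fun q _ => ?_)
  ring

theorem out_mem_iff (q : G ⧸ H) : (q.out : G) ∈ H ↔ q = QuotientGroup.mk (1 : G) := by
  constructor
  · intro h
    conv_lhs => rw [← QuotientGroup.out_eq' q]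
    rw [QuotientGroup.eq]
    simpa using H.inv_mem h
  · intro h
    rw [h] at *
    have := QuotientGroup.eq.1 (QuotientGroup.out_eq' (QuotientGroup.mk (1:G) : G ⧸ H)).symm
    simpa using this

include hHopen hμH in
/-- χ̇ is a left identity on U. -/
theorem conv_chiDot [Fintype (G ⧸ H)] {φ : G → ℂ} (hφ : φ ∈ inducedSubspace H χ) :
    heckeConv μ (chiDot H χ) φ = φ := by
  classical
  funext y
  rw [conv_eq_sum μ H hHopen hμH χ _ φ (chiDot_right H χ) hφ]
  rw [Finset.sum_eq_single (QuotientGroup.mk (1:G) : G ⧸ H)]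
  · have hr : ((QuotientGroup.mk (1:G) : G ⧸ H).out : G) ∈ H :=
      (out_mem_iff H _).2 rfl
    set h : H := ⟨_, hr⟩ with hhdef
    have h1 : chiDot H χ (QuotientGroup.mk (1:G) : G ⧸ H).out = (χ h : ℂ) := chiDot_mem_H H χ hr
    have h2 : φ ((QuotientGroup.mk (1:G) : G ⧸ H).out⁻¹ * y) = (χ h⁻¹ : ℂ) * φ y := hφ h⁻¹ y
    rw [h1, h2, ← mul_assoc, chi_mul_chi_inv H χ h, one_mul]
  · intro q _ hq
    have : chiDot H χ (q.out : G) = 0 := by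
      apply chiDot_not_mem
      exact fun hmem => hq ((out_mem_iff H q).1 hmem)
    rw [this, zero_mul]
  · intro h; exact absurd (Finset.mem_univ _) h

include hHopen hμH in
/-- Associativity. -/
theorem conv_assoc [Fintype (G ⧸ H)] {f f' : G → ℂ}
    (hf : f ∈ heckeSet H χ) (hf' : f' ∈ heckeSet H χ) {φ : G → ℂ}
    (hφ : φ ∈ inducedSubspace H χ) :
    heckeConv μ (heckeConv μ f f') φ = heckeConv μ f (heckeConv μ f' φ) := by
  funext y
  have hc := conv_mem_hecke μ H hHopen hμH χ hf hf'
  rw [conv_eq_sum μ H hHopen hμH χ _ φ (hecke_right H χ hc) hφ]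
  rw [conv_eq_sum μ H hHopen hμH χ f _ (hecke_right H χ hf)
    (fun h x => conv_left μ H χ f' φ (hecke_left H χ hf') h x)]
  have inner : ∀ q : G ⧸ H, heckeConv μ f' φ ((q.out : G)⁻¹ * y)
      = ∑ p : G ⧸ H, f' (q.out⁻¹ * p.out) * φ (p.out⁻¹ * y) := by
    intro q
    rw [conv_eq_sum μ H hHopen hμH χ f' φ (hecke_right H χ hf') hφ]
    exact (sum_reindex H χ f' φ (hecke_right H χ hf') hφ q.out⁻¹ y).symm
  have hr : ∑ q : G ⧸ H, f q.out * heckeConv μ f' φ ((q.out : G)⁻¹ * y)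
      = ∑ q : G ⧸ H, f q.out * ∑ p : G ⧸ H, f' (q.out⁻¹ * p.out) * φ (p.out⁻¹ * y) :=
    Finset.sum_congr rfl (fun q _ => by rw [inner q])
  rw [hr]
  simp only [Finset.mul_sum]
  rw [Finset.sum_comm]
  refine Finset.sum_congr rfl (fun q _ => ?_)
  rw [conv_eq_sum μ H hHopen hμH χ f f' (hecke_right H χ hf) (hecke_left H χ hf'),
    Finset.sum_mul]
  refine Finset.sum_congr rfl (fun p _ => ?_)
  ring

/-- Basis functions of U. -/
noncomputable def eFun (q : G ⧸ H) : G → ℂ := fun x => chiDot H χ (x * q.out)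

theorem eFun_mem (q : G ⧸ H) : eFun H χ q ∈ inducedSubspace H χ := by
  intro h x
  show chiDot H χ (↑h * x * q.out) = (χ h : ℂ) * chiDot H χ (x * q.out)
  rw [mul_assoc, chiDot_left H χ h]

theorem out_inv_mul_out_mem_iff (p q : G ⧸ H) :
    ((p.out : G))⁻¹ * q.out ∈ H ↔ p = q := by
  constructor
  · intro h
    rw [← QuotientGroup.out_eq' p, ← QuotientGroup.out_eq' q]
    exact QuotientGroup.eq.2 h
  · intro h
    subst h
    simp [H.one_mem]

theorem eFun_out_inv (p q : G ⧸ H) [Decidable (p = q)] :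
    eFun H χ q ((p.out : G)⁻¹) = if p = q then 1 else 0 := by
  by_cases h : p = q
  · subst h
    rw [if_pos rfl]
    show chiDot H χ (p.out⁻¹ * p.out) = 1
    rw [inv_mul_cancel, chiDot_one]
  · rw [if_neg h]
    exact chiDot_not_mem H χ (fun hc => h ((out_inv_mul_out_mem_iff H p q).1 hc))

/-- Expansion of an element of `U` in terms of the basis functions. -/
theorem induced_expansion [Fintype (G ⧸ H)] {φ : G → ℂ} (hφ : φ ∈ inducedSubspace H χ)
    (x : G) : φ x = ∑ q : G ⧸ H, φ ((q.out : G)⁻¹) * eFun H χ q x := by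
  classical
  rw [Finset.sum_eq_single (QuotientGroup.mk (x⁻¹) : G ⧸ H)]
  · set q0 : G ⧸ H := QuotientGroup.mk (x⁻¹) with hq0
    have hmem : x * (q0.out : G) ∈ H := by
      have : (QuotientGroup.mk (x⁻¹) : G ⧸ H) = QuotientGroup.mk (q0.out : G) := by
        rw [QuotientGroup.out_eq']
      have := QuotientGroup.eq.1 this
      simpa using this
    set h : H := ⟨x * q0.out, hmem⟩ with hhdef
    have h1 : eFun H χ q0 x = (χ h : ℂ) := chiDot_mem_H H χ hmem
    have h2 : φ x = (χ h : ℂ) * φ ((q0.out : G)⁻¹) := by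
      have := hφ h ((q0.out : G)⁻¹)
      have e : (↑h : G) * (q0.out : G)⁻¹ = x := by
        simp [hhdef, mul_assoc]
      rwa [e] at this
    rw [h1, h2]
    ring
  · intro q _ hq
    have : eFun H χ q x = 0 := by
      apply chiDot_not_mem
      intro hc
      apply hq
      have : (QuotientGroup.mk (x⁻¹) : G ⧸ H) = QuotientGroup.mk (q.out : G) :=
        QuotientGroup.eq.2 (by simpa using hc)
      rw [this, QuotientGroup.out_eq']
    rw [this, mul_zero]
  · intro h; exact absurd (Finset.mem_univ _) h

include hHopen hμH in
/-- Injectivity of Θ. -/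
theorem theta_injective [Fintype (G ⧸ H)] {f : G → ℂ} (hf : f ∈ heckeSet H χ)
    (h0 : ∀ φ ∈ inducedSubspace H χ, heckeConv μ f φ = 0) : f = 0 := by
  classical
  have hout : ∀ q : G ⧸ H, f q.out = 0 := by
    intro q
    have h1 : heckeConv μ f (eFun H χ q) 1 = 0 := by
      rw [h0 (eFun H χ q) (eFun_mem H χ q)]; rfl
    rw [conv_eq_sum μ H hHopen hμH χ f _ (hecke_right H χ hf) (eFun_mem H χ q)] at h1
    rw [Finset.sum_eq_single q] at h1
    · have : eFun H χ q ((q.out : G)⁻¹ * 1) = 1 := by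
        rw [mul_one]
        simpa using eFun_out_inv H χ q q
      rwa [this, mul_one] at h1
    · intro p _ hp
      have : eFun H χ q ((p.out : G)⁻¹ * 1) = 0 := by
        rw [mul_one]
        have := eFun_out_inv H χ p q
        rwa [if_neg hp] at this
      rw [this, mul_zero]
    · intro h; exact absurd (Finset.mem_univ _) h
  funext x
  set q : G ⧸ H := QuotientGroup.mk x with hq
  have hmem : (q.out : G)⁻¹ * x ∈ H := by
    have : (QuotientGroup.mk (q.out : G) : G ⧸ H) = QuotientGroup.mk x := by
      rw [QuotientGroup.out_eq']
    exact QuotientGroup.eq.1 this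
  set h : H := ⟨(q.out : G)⁻¹ * x, hmem⟩ with hhdef
  have e : (q.out : G) * ↑h = x := by simp [hhdef, mul_assoc]
  have := hecke_right H χ hf (q.out : G) h
  rw [e, hout q, zero_mul] at this
  simpa using this

/-- Elements of norm 1 with small subgroup property: positive arg case. -/
theorem nss_arg (S : Subgroup ℂˣ) (hS : ∀ z ∈ S, ‖(z : ℂ) - 1‖ < 1/2)
    (w : ℂˣ) (hw : w ∈ S) (habs : ‖(w : ℂ)‖ = 1)
    (harg : 0 < Complex.arg (w : ℂ)) : False := by
  set θ := Complex.arg (w : ℂ) with hθ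
  have hθπ : θ ≤ Real.pi := Complex.arg_le_pi _
  set n : ℕ := ⌈(Real.pi/2)/θ⌉₊ with hn
  have h1 : (Real.pi/2)/θ ≤ n := Nat.le_ceil _
  have h2 : (n : ℝ) < (Real.pi/2)/θ + 1 := Nat.ceil_lt_add_one (by positivity)
  have hnθ1 : Real.pi/2 ≤ n * θ := by
    rw [div_le_iff₀ harg] at h1; linarith
  have hnθ2 : (n : ℝ) * θ ≤ Real.pi + Real.pi/2 := by
    have hd : (Real.pi/2)/θ * θ = Real.pi/2 := div_mul_cancel₀ _ (ne_of_gt harg)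
    nlinarith
  have hcos : Real.cos (n * θ) ≤ 0 := Real.cos_nonpos_of_pi_div_two_le_of_le hnθ1 hnθ2
  -- w = exp(θ I)
  have hwexp : (w : ℂ) = Complex.exp (θ * Complex.I) := by
    have := Complex.norm_mul_exp_arg_mul_I (w : ℂ)
    rw [habs] at this; simpa using this.symm
  have hpow : ((w ^ n : ℂˣ) : ℂ) = Complex.exp ((n * θ : ℝ) * Complex.I) := by
    push_cast
    rw [hwexp, ← Complex.exp_nat_mul]
    ring_nf
  have hre : ((w ^ n : ℂˣ) : ℂ).re = Real.cos (n * θ) := by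
    rw [hpow, Complex.exp_ofReal_mul_I_re]
  have hb := hS _ (pow_mem hw n)
  have : (1 : ℂ).re - ((w ^ n : ℂˣ) : ℂ).re ≤ ‖((w ^ n : ℂˣ) : ℂ) - 1‖ := by
    calc (1 : ℂ).re - ((w ^ n : ℂˣ) : ℂ).re = ((1 : ℂ) - (w ^ n : ℂˣ)).re := by simp
    _ ≤ ‖(1 : ℂ) - (w ^ n : ℂˣ)‖ := Complex.re_le_norm _
    _ = ‖((w ^ n : ℂˣ) : ℂ) - 1‖ := norm_sub_rev _ _
  simp only [Complex.one_re] at this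
  rw [hre] at this
  linarith

theorem nss_abs (S : Subgroup ℂˣ) (hS : ∀ z ∈ S, ‖(z : ℂ) - 1‖ < 1/2)
    (w : ℂˣ) (hw : w ∈ S) (habs : 1 < ‖(w : ℂ)‖) : False := by
  obtain ⟨n, hn⟩ := pow_unbounded_of_one_lt (3/2 : ℝ) habs
  have hb := hS _ (pow_mem hw n)
  have : ‖((w ^ n : ℂˣ) : ℂ)‖ ≤ ‖((w ^ n : ℂˣ) : ℂ) - 1‖ + 1 := by
    calc ‖((w ^ n : ℂˣ) : ℂ)‖ = ‖(((w ^ n : ℂˣ) : ℂ) - 1) + 1‖ := by ring_nf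
    _ ≤ ‖((w ^ n : ℂˣ) : ℂ) - 1‖ + ‖(1:ℂ)‖ := norm_add_le _ _
    _ = ‖((w ^ n : ℂˣ) : ℂ) - 1‖ + 1 := by simp
  have hpow : ‖((w ^ n : ℂˣ) : ℂ)‖ = ‖(w : ℂ)‖ ^ n := by
    push_cast; exact norm_pow _ _
  rw [hpow] at this
  linarith

/-- No small subgroups in ℂˣ. -/
theorem no_small_subgroups (S : Subgroup ℂˣ)
    (hS : ∀ z ∈ S, ‖(z : ℂ) - 1‖ < 1/2) : ∀ z ∈ S, z = 1 := by
  intro z hz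
  by_contra hne
  -- |z| = 1
  have habs : ‖(z : ℂ)‖ = 1 := by
    by_contra hab
    rcases lt_or_gt_of_ne hab with hlt | hgt
    · refine nss_abs S hS z⁻¹ (inv_mem hz) ?_
      have hz0 : ‖(z : ℂ)‖ ≠ 0 := by simp [z.ne_zero]
      rw [Units.val_inv_eq_inv_val, norm_inv]
      exact (one_lt_inv₀ (lt_of_le_of_ne (norm_nonneg _) (Ne.symm hz0))).2 hlt
    · exact nss_abs S hS z hz hgt
  rcases lt_trichotomy (Complex.arg (z : ℂ)) 0 with hlt | heq | hgt
  · refine nss_arg S hS z⁻¹ (inv_mem hz) ?_ ?_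
    · rw [Units.val_inv_eq_inv_val, norm_inv, habs]; norm_num
    · rw [Units.val_inv_eq_inv_val, Complex.arg_inv]
      have : Complex.arg (z : ℂ) ≠ Real.pi := by
        intro h; rw [h] at hlt; exact absurd hlt (not_lt.2 Real.pi_pos.le)
      rw [if_neg this]; linarith
  · -- arg = 0 and abs = 1 force z = 1
    apply hne
    have := Complex.norm_mul_exp_arg_mul_I (z : ℂ)
    rw [habs, heq] at this
    simp at this
    exact Units.ext (by simp [← this])
  · exact nss_arg S hS z hz habs hgt



include hHopen in
theorem exists_chi_trivial (hχ : Continuous fun h : H => (χ h : ℂ)) :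
    ∃ K : Subgroup G, IsOpen (K : Set G) ∧ K ≤ H ∧
      ∀ (x : G) (hx : x ∈ H), x ∈ K → (χ ⟨x, hx⟩ : ℂ) = 1 := by
  have hHclosed : IsClosed (H : Set G) := OpenSubgroup.isClosed ⟨H, hHopen⟩
  have : CompactSpace H := isCompact_iff_compactSpace.1 hHclosed.isCompact
  have hVopen : IsOpen ((fun h : H => (χ h : ℂ)) ⁻¹' {z | ‖z - 1‖ < 1/2}) := by
    apply hχ.isOpen_preimage
    have : {z : ℂ | ‖z - 1‖ < 1/2}
        = (fun z : ℂ => ‖z - 1‖) ⁻¹' (Set.Iio (1/2)) := rfl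
    rw [this]
    exact (continuous_norm.comp
      (continuous_id.sub continuous_const)).isOpen_preimage _ isOpen_Iio
  have h1V : (1 : H) ∈ (fun h : H => (χ h : ℂ)) ⁻¹' {z | ‖z - 1‖ < 1/2} := by
    simp [Set.mem_preimage]
  obtain ⟨K', hK'open, hK'sub⟩ := exists_openSubgroup_sub hVopen h1V
  refine ⟨K'.map H.subtype, ?_, Subgroup.map_subtype_le K', ?_⟩
  · have : ((K'.map H.subtype : Subgroup G) : Set G) = (Subtype.val : H → G) '' (K' : Set H) := by
      ext x; simp [Subgroup.mem_map]
    rw [this]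
    exact hHopen.isOpenMap_subtype_val _ hK'open
  · intro x hx hxK
    obtain ⟨k, hk, hkx⟩ := Subgroup.mem_map.1 hxK
    have hiz : ∀ z ∈ K'.map χ, ‖(z : ℂ) - 1‖ < 1/2 := by
      rintro z hz
      obtain ⟨k', hk', rfl⟩ := Subgroup.mem_map.1 hz
      exact hK'sub hk'
    have : χ k = 1 := no_small_subgroups _ hiz _ (Subgroup.mem_map.2 ⟨k, hk, rfl⟩)
    have hxe : (⟨x, hx⟩ : H) = k := by
      apply Subtype.ext; simp [← hkx]
    rw [hxe, this]; simp

include hHopen in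
theorem chiDot_locallyConstant (hχ : Continuous fun h : H => (χ h : ℂ)) :
    IsLocallyConstant (chiDot H χ) := by
  obtain ⟨K, hKopen, hKle, hKtriv⟩ := exists_chi_trivial H hHopen χ hχ
  refine isLocallyConstant_of_invariant hKopen K.one_mem (fun x s hs => ?_)
  have := chiDot_right H χ x ⟨s, hKle hs⟩
  rw [hKtriv s (hKle hs) hs, mul_one] at this
  exact this

include hHopen in
theorem chiDot_mem_hecke (hχ : Continuous fun h : H => (χ h : ℂ)) :
    chiDot H χ ∈ heckeSet H χ := by
  refine ⟨chiDot_locallyConstant H hHopen χ hχ, fun h₁ h₂ x => ?_⟩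
  rw [chiDot_right H χ _ h₂, chiDot_left H χ h₁ x]

include hHopen in
theorem eFun_locallyConstant (hχ : Continuous fun h : H => (χ h : ℂ)) (q : G ⧸ H) :
    IsLocallyConstant (eFun H χ q) :=
  (chiDot_locallyConstant H hHopen χ hχ).comp_continuous
    (continuous_id.mul continuous_const)

include hHopen in
theorem induced_locallyConstant [Fintype (G ⧸ H)] (hχ : Continuous fun h : H => (χ h : ℂ))
    {φ : G → ℂ} (hφ : φ ∈ inducedSubspace H χ) : IsLocallyConstant φ := by
  classical
  have huni : ∀ q : G ⧸ H, ∃ S : Set G, IsOpen S ∧ (1:G) ∈ S ∧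
      ∀ x, ∀ s ∈ S, eFun H χ q (x * s) = eFun H χ q x :=
    fun q => exists_uniform_invariance (eFun_locallyConstant H hHopen χ hχ q)
  choose S hSopen hS1 hSinv using huni
  refine isLocallyConstant_of_invariant (isOpen_iInter_of_finite hSopen)
    (Set.mem_iInter.2 hS1) (fun x s hs => ?_)
  rw [induced_expansion H χ hφ (x * s), induced_expansion H χ hφ x]
  refine Finset.sum_congr rfl (fun q _ => ?_)
  rw [hSinv q x s (Set.mem_iInter.1 hs q)]

variable [Fintype (G ⧸ H)]

/-- The element of `U` given by a basis function. -/
noncomputable def eU (q : G ⧸ H) : inducedSubspace H χ :=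
  ⟨eFun H χ q, eFun_mem H χ q⟩

/-- The element χ̇ of `U`. -/
noncomputable def chiU : inducedSubspace H χ :=
  ⟨chiDot H χ, chiDot_mem_induced H χ⟩

theorem coe_sum_smul_eU (c : G ⧸ H → ℂ) :
    ((∑ q : G ⧸ H, c q • eU H χ q : inducedSubspace H χ) : G → ℂ)
      = fun x => ∑ q : G ⧸ H, c q * eFun H χ q x := by
  rw [AddSubmonoidClass.coe_finset_sum]
  funext x
  rw [Finset.sum_apply]
  rfl

theorem induced_eq_sum {φ : G → ℂ} (hφ : φ ∈ inducedSubspace H χ) :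
    (⟨φ, hφ⟩ : inducedSubspace H χ)
      = ∑ q : G ⧸ H, φ ((q.out : G)⁻¹) • eU H χ q := by
  apply Subtype.ext
  rw [coe_sum_smul_eU]
  funext x
  exact induced_expansion H χ hφ x

include hHopen hμH in
/-- Surjectivity of Θ. -/
theorem theta_surjective (hχ : Continuous fun h : H => (χ h : ℂ))
    (T : inducedSubspace H χ →ₗ[ℂ] inducedSubspace H χ)
    (hT : ∀ (φ φ' : inducedSubspace H χ) (g : G),
        (∀ x, (φ' : G → ℂ) x = (φ : G → ℂ) (x * g)) →
        ∀ y, (T φ' : G → ℂ) y = (T φ : G → ℂ) (y * g)) :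
    ∃ f ∈ heckeSet H χ, ∀ (φ : inducedSubspace H χ) (y : G),
      (T φ : G → ℂ) y = heckeConv μ f (φ : G → ℂ) y := by
  classical
  set ψ : inducedSubspace H χ := T (chiU H χ) with hψ
  set f : G → ℂ := (ψ : G → ℂ) with hfdef
  have hfL : ∀ (h : H) (x : G), f (↑h * x) = (χ h : ℂ) * f x := ψ.2
  have hfR : ∀ (y : G) (h : H), f (y * ↑h) = f y * (χ h : ℂ) := by
    intro y h
    have hpt : ∀ x, (((χ h : ℂ) • chiU H χ : inducedSubspace H χ) : G → ℂ) x
        = ((chiU H χ : inducedSubspace H χ) : G → ℂ) (x * ↑h) := by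
      intro x
      show (χ h : ℂ) * chiDot H χ x = chiDot H χ (x * ↑h)
      rw [chiDot_right H χ x h]; ring
    have := hT (chiU H χ) ((χ h : ℂ) • chiU H χ) ↑h hpt y
    rw [_root_.map_smul] at this
    have hcoe : ((((χ h : ℂ) • T (chiU H χ)) : inducedSubspace H χ) : G → ℂ) y
        = (χ h : ℂ) * f y := rfl
    rw [hcoe] at this
    have h2 : (χ h : ℂ) * f y = f (y * ↑h) := this
    rw [← h2]; ring
  have hfmem : f ∈ heckeSet H χ := by
    refine ⟨induced_locallyConstant H hHopen χ hχ ψ.2, fun h₁ h₂ x => ?_⟩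
    rw [hfR (↑h₁ * x) h₂, hfL h₁ x]
  refine ⟨f, hfmem, fun φ y => ?_⟩
  -- expand φ
  have hexp : φ = ∑ q : G ⧸ H, (φ : G → ℂ) ((q.out : G)⁻¹) • eU H χ q := by
    have := induced_eq_sum H χ φ.2
    simpa using this
  have hTeU : ∀ (q : G ⧸ H) (z : G), (T (eU H χ q) : G → ℂ) z = f (z * q.out) := by
    intro q z
    exact hT (chiU H χ) (eU H χ q) q.out (fun _ => rfl) z
  have hTφ : (T φ : G → ℂ) y = ∑ q : G ⧸ H, (φ : G → ℂ) ((q.out : G)⁻¹) * f (y * q.out) := by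
    conv_lhs => rw [hexp, map_sum]
    have hcoe : ((∑ q : G ⧸ H, T ((φ : G → ℂ) ((q.out : G)⁻¹) • eU H χ q)
        : inducedSubspace H χ) : G → ℂ) y
        = ∑ q : G ⧸ H, ((T ((φ : G → ℂ) ((q.out : G)⁻¹) • eU H χ q)
            : inducedSubspace H χ) : G → ℂ) y := by
      rw [AddSubmonoidClass.coe_finset_sum, Finset.sum_apply]
    rw [hcoe]
    refine Finset.sum_congr rfl (fun q _ => ?_)
    rw [_root_.map_smul]
    have hterm : (((φ : G → ℂ) ((q.out : G)⁻¹) • T (eU H χ q)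
        : inducedSubspace H χ) : G → ℂ) y
        = (φ : G → ℂ) ((q.out : G)⁻¹) * (T (eU H χ q) : G → ℂ) y := rfl
    rw [hterm, hTeU q y]
  rw [hTφ]
  rw [conv_eq_sum μ H hHopen hμH χ f _ hfR φ.2 y]
  have := sum_reindex H χ f (φ : G → ℂ) hfR φ.2 y 1
  simp only [mul_one] at this
  rw [← this]
  refine Finset.sum_congr rfl (fun q _ => ?_)
  ring

include hHopen hμH in
/-- Trace-zero property. -/
theorem theta_trace_zero {f : G → ℂ} (hf : f ∈ heckeSet H χ)
    (hvan : ∀ x ∈ H, f x = 0)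
    (T : inducedSubspace H χ →ₗ[ℂ] inducedSubspace H χ)
    (hT : ∀ (φ : inducedSubspace H χ) (y : G),
        (T φ : G → ℂ) y = heckeConv μ f (φ : G → ℂ) y) :
    LinearMap.trace ℂ (inducedSubspace H χ) T = 0 := by
  classical
  -- the evaluation linear map
  set ev : inducedSubspace H χ →ₗ[ℂ] (G ⧸ H → ℂ) :=
    { toFun := fun φ q => (φ : G → ℂ) ((q.out : G)⁻¹)
      map_add' := fun a b => rfl
      map_smul' := fun c a => rfl } with hev
  have hbij : Function.Bijective ev := by
    constructor
    · intro a b hab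
      apply Subtype.ext
      funext x
      rw [induced_expansion H χ a.2 x, induced_expansion H χ b.2 x]
      refine Finset.sum_congr rfl (fun q _ => ?_)
      have := congrFun hab q
      simp only [hev, LinearMap.coe_mk, AddHom.coe_mk] at this
      rw [this]
    · intro c
      refine ⟨∑ q : G ⧸ H, c q • eU H χ q, ?_⟩
      funext p
      show ((∑ q : G ⧸ H, c q • eU H χ q : inducedSubspace H χ) : G → ℂ) ((p.out : G)⁻¹) = c p
      rw [coe_sum_smul_eU]
      show ∑ q : G ⧸ H, c q * eFun H χ q ((p.out : G)⁻¹) = c p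
      rw [Finset.sum_eq_single p]
      · rw [eFun_out_inv H χ p p, if_pos rfl, mul_one]
      · intro q _ hq
        rw [eFun_out_inv H χ p q, if_neg (Ne.symm hq), mul_zero]
      · intro h; exact absurd (Finset.mem_univ _) h
  set eqv : inducedSubspace H χ ≃ₗ[ℂ] (G ⧸ H → ℂ) := LinearEquiv.ofBijective ev hbij with heqv
  set b : Module.Basis (G ⧸ H) ℂ (inducedSubspace H χ) := Module.Basis.ofEquivFun eqv with hb
  haveI : Module.Finite ℂ (inducedSubspace H χ) := Module.Finite.equiv eqv.symm
  have hbq : ∀ q : G ⧸ H, b q = eU H χ q := by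
    intro q
    apply eqv.injective
    funext p
    have h1 : eqv (b q) p = b.repr (b q) p := (Module.Basis.ofEquivFun_repr_apply eqv (b q) p).symm
    rw [h1, Module.Basis.repr_self, Finsupp.single_apply]
    have h2 : eqv (eU H χ q) p = eFun H χ q ((p.out : G)⁻¹) := rfl
    rw [h2, eFun_out_inv H χ p q]
    by_cases h : p = q
    · rw [if_pos h, if_pos h.symm]
    · rw [if_neg h, if_neg (fun hc => h hc.symm)]
  rw [LinearMap.trace_eq_matrix_trace ℂ b T]
  rw [Matrix.trace]
  have hdiag : ∀ q : G ⧸ H, (LinearMap.toMatrix b b T).diag q = 0 := by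
    intro q
    rw [Matrix.diag]
    rw [LinearMap.toMatrix_apply]
    have h1 : b.repr (T (b q)) q = eqv (T (b q)) q := Module.Basis.ofEquivFun_repr_apply eqv _ q
    rw [h1]
    have h2 : eqv (T (b q)) q = (T (b q) : G → ℂ) ((q.out : G)⁻¹) := rfl
    rw [h2, hbq q]
    have h3 : (T (eU H χ q) : G → ℂ) ((q.out : G)⁻¹)
        = heckeConv μ f (eFun H χ q) ((q.out : G)⁻¹) := hT (eU H χ q) _
    rw [h3, conv_eq_sum μ H hHopen hμH χ f _ (hecke_right H χ hf) (eFun_mem H χ q)]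
    refine Finset.sum_eq_zero (fun p _ => ?_)
    have h4 : eFun H χ q ((p.out : G)⁻¹ * (q.out : G)⁻¹) = chiDot H χ ((p.out : G)⁻¹) := by
      show chiDot H χ ((p.out : G)⁻¹ * (q.out : G)⁻¹ * q.out) = _
      rw [mul_assoc, inv_mul_cancel, mul_one]
    rw [h4]
    by_cases hp : (p.out : G) ∈ H
    · rw [hvan _ hp, zero_mul]
    · rw [chiDot_not_mem H χ (fun hc => hp (by simpa using H.inv_mem hc)), mul_zero]
  rw [Finset.sum_congr rfl (fun q _ => hdiag q)]
  simp

end HeckeProof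

/-- Let `G` be a profinite group, `H` an open subgroup, `μ` the Haar measure with
`μ(H) = 1`, and `χ : H → ℂˣ` a continuous homomorphism.  Then the map `Θ` sending
`f` in the Hecke algebra `𝓗` to the endomorphism `φ ↦ f ⋆ φ` of the induced
representation `U` is an isomorphism of `ℂ`-algebras onto `End_G(U)`, the algebra of
`G`-equivariant linear endomorphisms of `U`; moreover every `f ∈ 𝓗` vanishing
identically on `H` acts on `U` as a trace-zero endomorphism.  (The conjunction below
states: `𝓗` contains `χ̇` and is closed under convolution; `Θ(f)` preserves `U` and
commutes with right translation; `Θ` is `ℂ`-linear, unital, multiplicative,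
injective, and surjective onto the `G`-equivariant endomorphisms; and the trace-zero
property.) -/
theorem hecke_algebra_iso_equivariant_endomorphisms
    {G : Type*} [Group G] [TopologicalSpace G] [IsTopologicalGroup G]
    [CompactSpace G] [T2Space G] [TotallyDisconnectedSpace G]
    [MeasurableSpace G] [BorelSpace G]
    (μ : Measure G) [μ.IsHaarMeasure]
    (H : Subgroup G) (hHopen : IsOpen (H : Set G)) (hμH : μ (H : Set G) = 1)
    (χ : H →* ℂˣ) (hχ : Continuous fun h : H => (χ h : ℂ)) :
    (chiDot H χ ∈ heckeSet H χ) ∧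
    (∀ f ∈ heckeSet H χ, ∀ f' ∈ heckeSet H χ, heckeConv μ f f' ∈ heckeSet H χ) ∧
    (∀ f ∈ heckeSet H χ, ∀ φ ∈ inducedSubspace H χ,
        heckeConv μ f φ ∈ inducedSubspace H χ) ∧
    (∀ f ∈ heckeSet H χ, ∀ φ ∈ inducedSubspace H χ, ∀ g y : G,
        heckeConv μ f (fun x => φ (x * g)) y = heckeConv μ f φ (y * g)) ∧
    (∀ f ∈ heckeSet H χ, ∀ f' ∈ heckeSet H χ, ∀ c : ℂ, ∀ φ ∈ inducedSubspace H χ,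
        heckeConv μ (c • f + f') φ = c • heckeConv μ f φ + heckeConv μ f' φ) ∧
    (∀ φ ∈ inducedSubspace H χ, heckeConv μ (chiDot H χ) φ = φ) ∧
    (∀ f ∈ heckeSet H χ, ∀ f' ∈ heckeSet H χ, ∀ φ ∈ inducedSubspace H χ,
        heckeConv μ (heckeConv μ f f') φ = heckeConv μ f (heckeConv μ f' φ)) ∧
    (∀ f ∈ heckeSet H χ,
        (∀ φ ∈ inducedSubspace H χ, heckeConv μ f φ = 0) → f = 0) ∧
    (∀ T : inducedSubspace H χ →ₗ[ℂ] inducedSubspace H χ,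
        (∀ (φ φ' : inducedSubspace H χ) (g : G),
            (∀ x, (φ' : G → ℂ) x = (φ : G → ℂ) (x * g)) →
            ∀ y, (T φ' : G → ℂ) y = (T φ : G → ℂ) (y * g)) →
        ∃ f ∈ heckeSet H χ, ∀ (φ : inducedSubspace H χ) (y : G),
          (T φ : G → ℂ) y = heckeConv μ f (φ : G → ℂ) y) ∧
    (∀ f ∈ heckeSet H χ, (∀ x ∈ H, f x = 0) →
        ∀ T : inducedSubspace H χ →ₗ[ℂ] inducedSubspace H χ,
          (∀ (φ : inducedSubspace H χ) (y : G),
              (T φ : G → ℂ) y = heckeConv μ f (φ : G → ℂ) y) →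
          LinearMap.trace ℂ (inducedSubspace H χ) T = 0) := by
  have hfin : Finite (G ⧸ H) := H.quotient_finite_of_isOpen hHopen
  have : Fintype (G ⧸ H) := Fintype.ofFinite _
  refine ⟨HeckeProof.chiDot_mem_hecke H hHopen χ hχ,
    fun f hf f' hf' => HeckeProof.conv_mem_hecke μ H hHopen hμH χ hf hf',
    fun f hf φ hφ => HeckeProof.conv_mem_induced μ H χ f φ (HeckeProof.hecke_left H χ hf),
    fun f hf φ hφ g y => by simp [heckeConv, mul_assoc],
    fun f hf f' hf' c φ hφ => HeckeProof.conv_add_smul μ H hHopen hμH χ hf hf' c hφ,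
    fun φ hφ => HeckeProof.conv_chiDot μ H hHopen hμH χ hφ,
    fun f hf f' hf' φ hφ => HeckeProof.conv_assoc μ H hHopen hμH χ hf hf' hφ,
    fun f hf h0 => HeckeProof.theta_injective μ H hHopen hμH χ hf h0,
    fun T hT => HeckeProof.theta_surjective μ H hHopen hμH χ hχ T hT,
    fun f hf hvan T hT => HeckeProof.theta_trace_zero μ H hHopen hμH χ hf hvan T hT⟩
end

section
/- Let G be a profinite group, H an open subgroup, μ the Haar measure on G with μ(H) = 1, χ : H → ℂˣ a continuous homomorphism, and x ∈ G with x ∉ H. Let U and the convolution algebra 𝓗 (with identity χ̇) be as in the Hecke-algebra setup. Assume that every f ∈ 𝓗 vanishes outside H ∪ HxH, and that U possesses a G-invariant subspace W with 0 < dim W < dim U. Set λ = (dim U - dim W) / dim W. Then there exists f ∈ 𝓗, vanishing identically on H and not identically zero (hence supported on the double coset HxH), such that f ⋆ φ = λ·φ for every φ ∈ W, and f satisfies the quadratic relation f ⋆ f = (λ - 1)·f + λ·χ̇ in 𝓗; equivalently (Θ(f) - λ)(Θ(f) + 1) = 0 on U. -/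
open MeasureTheory

namespace HQRaux

lemma pow_small {z : ℂ} (h : ∀ n : ℕ, ‖z ^ 2 ^ n - 1‖ ≤ 1/4) : z = 1 := by
  by_contra hz
  have hd : 0 < ‖z - 1‖ := by
    simpa [sub_eq_zero] using (norm_pos_iff).2 (sub_ne_zero.2 hz)
  have key : ∀ n : ℕ, (7/4 : ℝ) ^ n * ‖z - 1‖ ≤ ‖z ^ 2 ^ n - 1‖ := by
    intro n; induction n with
    | zero => simp
    | succ n ih =>
      set w := z ^ 2 ^ n with hw
      have h2 : z ^ 2 ^ (n + 1) = w ^ 2 := by rw [hw, ← pow_mul, pow_succ]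
      have hfac : z ^ 2 ^ (n + 1) - 1 = (w - 1) * (w + 1) := by rw [h2]; ring
      have hwa : (7/4 : ℝ) ≤ ‖w + 1‖ := by
        have h1 : ‖(2 : ℂ)‖ ≤ ‖w + 1‖ + ‖w - 1‖ := by
          calc ‖(2:ℂ)‖ = ‖(w + 1) - (w - 1)‖ := by ring_nf
          _ ≤ ‖w + 1‖ + ‖w - 1‖ := norm_sub_le _ _
        have h2' : ‖w - 1‖ ≤ 1/4 := h n
        have : ‖(2:ℂ)‖ = 2 := by simp
        linarith
      calc (7/4 : ℝ) ^ (n+1) * ‖z - 1‖ = (7/4) * ((7/4)^n * ‖z-1‖) := by ring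
      _ ≤ (7/4) * ‖w - 1‖ := by nlinarith
      _ ≤ ‖w + 1‖ * ‖w - 1‖ := by nlinarith [norm_nonneg (w - 1)]
      _ = ‖z ^ 2 ^ (n+1) - 1‖ := by rw [hfac, norm_mul]; ring
  obtain ⟨n, hn⟩ := pow_unbounded_of_one_lt ((1/4 : ℝ) / ‖z - 1‖) (by norm_num : (1:ℝ) < 7/4)
  have := key n
  have h4 := h n
  have : (1/4 : ℝ) / ‖z - 1‖ * ‖z - 1‖ < (7/4)^n * ‖z-1‖ := by
    apply mul_lt_mul_of_pos_right hn hd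
  rw [div_mul_cancel₀ _ (ne_of_gt hd)] at this
  linarith

variable {G : Type*} [Group G] {H : Subgroup G} {χ : H →* ℂˣ}

lemma mem_induced_iff {φ : G → ℂ} :
    φ ∈ inducedSubspace H χ ↔ ∀ (h : H) (x : G), φ (↑h * x) = (χ h : ℂ) * φ x := Iff.rfl

lemma chi_mul_chi_inv (h : H) : (χ h : ℂ) * (χ h⁻¹ : ℂ) = 1 := by
  rw [map_inv]; exact Units.mul_inv _

lemma chi_inv_mul_chi (h : H) : (χ h⁻¹ : ℂ) * (χ h : ℂ) = 1 := by
  rw [map_inv]; exact Units.inv_mul _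

lemma chiDot_left (h : H) (x : G) :
    chiDot H χ (↑h * x) = (χ h : ℂ) * chiDot H χ x := by
  unfold chiDot
  by_cases hx : x ∈ H
  · have hhx : (↑h * x) ∈ H := H.mul_mem h.2 hx
    rw [dif_pos hhx, dif_pos hx]
    have : (⟨↑h * x, hhx⟩ : H) = h * ⟨x, hx⟩ := rfl
    rw [this, map_mul]; push_cast; ring
  · rw [dif_neg, dif_neg hx, mul_zero]
    intro hmem
    exact hx (by simpa using H.mul_mem (H.inv_mem h.2) hmem)

lemma chiDot_right (x : G) (h : H) :
    chiDot H χ (x * ↑h) = chiDot H χ x * (χ h : ℂ) := by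
  unfold chiDot
  by_cases hx : x ∈ H
  · have hhx : (x * ↑h) ∈ H := H.mul_mem hx h.2
    rw [dif_pos hhx, dif_pos hx]
    have : (⟨x * ↑h, hhx⟩ : H) = ⟨x, hx⟩ * h := rfl
    rw [this, map_mul]; push_cast; ring
  · rw [dif_neg, dif_neg hx, zero_mul]
    intro hmem
    exact hx (by simpa using H.mul_mem hmem (H.inv_mem h.2))

lemma chiDot_of_not_mem {x : G} (hx : x ∉ H) : chiDot H χ x = 0 := dif_neg hx

lemma chiDot_of_mem {x : G} (hx : x ∈ H) : chiDot H χ x = (χ ⟨x, hx⟩ : ℂ) := dif_pos hx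

lemma chiDot_one : chiDot H χ 1 = 1 := by
  rw [chiDot_of_mem H.one_mem]
  have : (⟨(1:G), H.one_mem⟩ : H) = 1 := rfl
  rw [this, map_one]; rfl

lemma chiDot_mem_induced : chiDot H χ ∈ inducedSubspace H χ :=
  mem_induced_iff.2 fun h x => chiDot_left h x


section Measure
variable [TopologicalSpace G] [IsTopologicalGroup G] [MeasurableSpace G] [BorelSpace G]

lemma integral_eq_sum_cosets
    (μ : Measure G) [μ.IsMulLeftInvariant] [IsFiniteMeasure μ]
    (H : Subgroup G) (hHopen : IsOpen (H : Set G)) (hμH : μ (H : Set G) = 1)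
    [Fintype (G ⧸ H)]
    (F : G → ℂ) (hF : ∀ (x h : G), h ∈ H → F (x * h) = F x) :
    Integrable F μ ∧ ∫ x, F x ∂μ = ∑ q : G ⧸ H, F (Quotient.out q) := by
  classical
  set cs : (G ⧸ H) → Set G := fun q => (fun y => (Quotient.out q)⁻¹ * y) ⁻¹' (H : Set G) with hcs
  have hmem_iff : ∀ (q : G ⧸ H) (x : G), x ∈ cs q ↔ (QuotientGroup.mk x : G ⧸ H) = q := by
    intro q x
    simp only [hcs, Set.mem_preimage, SetLike.mem_coe]
    constructor
    · intro h
      have h2 : (QuotientGroup.mk (Quotient.out q) : G ⧸ H) = QuotientGroup.mk x :=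
        QuotientGroup.eq.2 h
      rw [QuotientGroup.out_eq'] at h2
      exact h2.symm
    · intro h
      rw [← h]
      have := QuotientGroup.eq.1 (QuotientGroup.out_eq' (QuotientGroup.mk x : G ⧸ H))
      exact this
  have hmeas : ∀ q, MeasurableSet (cs q) := fun q =>
    (hHopen.preimage (continuous_const.mul continuous_id)).measurableSet
  have hFeq : F = fun x => ∑ q : G ⧸ H,
      Set.indicator (cs q) (fun _ => F (Quotient.out q)) x := by
    funext x
    rw [Finset.sum_eq_single (QuotientGroup.mk x : G ⧸ H)]
    · rw [Set.indicator_of_mem ((hmem_iff _ x).2 rfl)]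
      have hh : (Quotient.out (QuotientGroup.mk x : G ⧸ H))⁻¹ * x ∈ H :=
        QuotientGroup.eq.1 (QuotientGroup.out_eq' (QuotientGroup.mk x : G ⧸ H))
      have := hF (Quotient.out (QuotientGroup.mk x : G ⧸ H)) _ hh
      rw [mul_inv_cancel_left] at this
      exact this
    · intro q _ hq
      exact Set.indicator_of_notMem (fun hm => hq ((hmem_iff q x).1 hm).symm) _
    · intro h; exact absurd (Finset.mem_univ _) h
  have hμcs : ∀ q, μ (cs q) = 1 := by
    intro q
    rw [hcs]
    have := measure_preimage_mul μ (Quotient.out q)⁻¹ (H : Set G)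
    simpa [hμH] using this
  have hint : ∀ q : G ⧸ H, Integrable
      (fun x => Set.indicator (cs q) (fun _ => F (Quotient.out q)) x) μ :=
    fun q => (integrable_const _).indicator (hmeas q)
  constructor
  · rw [hFeq]; exact integrable_finset_sum _ (fun q _ => hint q)
  · conv_lhs => rw [hFeq]
    rw [integral_finset_sum _ (fun q _ => hint q)]
    refine Finset.sum_congr rfl fun q _ => ?_
    rw [integral_indicator_const _ (hmeas q), measureReal_def, hμcs q]
    simp


end Measure
lemma expansion [Fintype (G ⧸ H)] {φ : G → ℂ} (hφ : φ ∈ inducedSubspace H χ) (x : G) :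
    φ x = ∑ q : G ⧸ H, φ ((Quotient.out q)⁻¹) * chiDot H χ (x * Quotient.out q) := by
  rw [Finset.sum_eq_single (QuotientGroup.mk x⁻¹ : G ⧸ H)]
  · set s := Quotient.out (QuotientGroup.mk x⁻¹ : G ⧸ H) with hsdef
    have hs : x⁻¹⁻¹ * s ∈ H := QuotientGroup.eq.1 (QuotientGroup.out_eq' _).symm
    have hxs : x * s ∈ H := by simpa using hs
    have hval : φ x = (χ ⟨x * s, hxs⟩ : ℂ) * φ s⁻¹ := by
      have h2 := hφ ⟨x * s, hxs⟩ s⁻¹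
      rw [mul_assoc, mul_inv_cancel, mul_one] at h2
      exact h2
    rw [hval, chiDot_of_mem hxs]; ring
  · intro q _ hq
    have hz : chiDot H χ (x * Quotient.out q) = 0 := by
      apply chiDot_of_not_mem
      intro hm
      apply hq
      have h2 : (QuotientGroup.mk x⁻¹ : G ⧸ H) = QuotientGroup.mk (Quotient.out q) :=
        QuotientGroup.eq.2 (by simpa using hm)
      rw [QuotientGroup.out_eq'] at h2
      exact h2.symm
    rw [hz, mul_zero]
  · intro h; exact absurd (Finset.mem_univ _) h

section Conv
variable [TopologicalSpace G] [IsTopologicalGroup G] [MeasurableSpace G] [BorelSpace G]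
variable (μ : Measure G) [μ.IsMulLeftInvariant] [IsFiniteMeasure μ] [Fintype (G ⧸ H)]

lemma conv_eq_sum (hHopen : IsOpen (H : Set G)) (hμH : μ (H : Set G) = 1)
    {f φ : G → ℂ}
    (hf : ∀ (x : G) (h : H), f (x * ↑h) = f x * (χ h : ℂ))
    (hφ : φ ∈ inducedSubspace H χ) (y : G) :
    heckeConv μ f φ y
      = ∑ q : G ⧸ H, f (Quotient.out q) * φ ((Quotient.out q)⁻¹ * y) := by
  have hF : ∀ (x h : G), h ∈ H →
      (fun x => f x * φ (x⁻¹ * y)) (x * h) = (fun x => f x * φ (x⁻¹ * y)) x := by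
    intro x h hh
    simp only
    have e1 : (x * h)⁻¹ * y = (↑((⟨h, hh⟩ : H)⁻¹) : G) * (x⁻¹ * y) := by
      push_cast; group
    rw [hf x ⟨h, hh⟩, e1, hφ (⟨h, hh⟩ : H)⁻¹ (x⁻¹ * y)]
    calc f x * ↑(χ ⟨h, hh⟩) * (↑(χ (⟨h, hh⟩ : H)⁻¹) * φ (x⁻¹ * y))
        = f x * φ (x⁻¹ * y) * ((χ ⟨h, hh⟩ : ℂ) * (χ (⟨h, hh⟩ : H)⁻¹ : ℂ)) := by ring
      _ = f x * φ (x⁻¹ * y) := by rw [chi_mul_chi_inv]; ring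
  exact (integral_eq_sum_cosets μ H hHopen hμH _ hF).2

lemma conv_chiDot_right (hHopen : IsOpen (H : Set G)) (hμH : μ (H : Set G) = 1)
    {f : G → ℂ}
    (hf : ∀ (x : G) (h : H), f (x * ↑h) = f x * (χ h : ℂ)) (y : G) :
    heckeConv μ f (chiDot H χ) y = f y := by
  rw [conv_eq_sum μ hHopen hμH hf chiDot_mem_induced y]
  rw [Finset.sum_eq_single (QuotientGroup.mk y : G ⧸ H)]
  · set s := Quotient.out (QuotientGroup.mk y : G ⧸ H) with hsdef
    have hs : s⁻¹ * y ∈ H := by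
      have := QuotientGroup.eq.1 (QuotientGroup.out_eq' (QuotientGroup.mk y : G ⧸ H))
      simpa using this
    rw [chiDot_of_mem hs, ← hf s ⟨s⁻¹ * y, hs⟩]
    rw [show s * (s⁻¹ * y) = y by group]
  · intro q _ hq
    have hz : chiDot H χ ((Quotient.out q)⁻¹ * y) = 0 := by
      apply chiDot_of_not_mem
      intro hm
      apply hq
      have h2 : (QuotientGroup.mk (Quotient.out q) : G ⧸ H) = QuotientGroup.mk y :=
        QuotientGroup.eq.2 hm
      rw [QuotientGroup.out_eq'] at h2
      exact h2
    rw [hz, mul_zero]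
  · intro h; exact absurd (Finset.mem_univ _) h

omit [TopologicalSpace G] [IsTopologicalGroup G] [MeasurableSpace G] [BorelSpace G] [Fintype (G ⧸ H)] in
lemma chiDot_RE : ∀ (x : G) (h : H), chiDot H χ (x * ↑h) = chiDot H χ x * (χ h : ℂ) :=
  fun x h => chiDot_right x h

lemma conv_chiDot_left (hHopen : IsOpen (H : Set G)) (hμH : μ (H : Set G) = 1)
    {φ : G → ℂ} (hφ : φ ∈ inducedSubspace H χ) (y : G) :
    heckeConv μ (chiDot H χ) φ y = φ y := by
  rw [conv_eq_sum μ hHopen hμH chiDot_RE hφ y]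
  rw [Finset.sum_eq_single (QuotientGroup.mk (1 : G) : G ⧸ H)]
  · set s := Quotient.out (QuotientGroup.mk (1 : G) : G ⧸ H) with hsdef
    have hs : s ∈ H := by
      have := QuotientGroup.eq.1 (QuotientGroup.out_eq' (QuotientGroup.mk (1:G) : G ⧸ H)).symm
      simpa using this
    have e1 : s⁻¹ * y = (↑((⟨s, hs⟩ : H)⁻¹) : G) * y := by push_cast; ring
    rw [chiDot_of_mem hs, e1, hφ (⟨s, hs⟩ : H)⁻¹ y]
    calc (χ ⟨s, hs⟩ : ℂ) * ((χ (⟨s, hs⟩ : H)⁻¹ : ℂ) * φ y)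
        = ((χ ⟨s, hs⟩ : ℂ) * (χ (⟨s, hs⟩ : H)⁻¹ : ℂ)) * φ y := by ring
      _ = φ y := by rw [chi_mul_chi_inv]; ring
  · intro q _ hq
    have hz : chiDot H χ (Quotient.out q) = 0 := by
      apply chiDot_of_not_mem
      intro hm
      apply hq
      have h2 : (QuotientGroup.mk (1:G) : G ⧸ H) = QuotientGroup.mk (Quotient.out q) :=
        QuotientGroup.eq.2 (by simpa using hm)
      rw [QuotientGroup.out_eq'] at h2
      exact h2.symm
    rw [hz, zero_mul]
  · intro h; exact absurd (Finset.mem_univ _) h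

end Conv

end HQRaux


set_option maxHeartbeats 1000000 in
set_option synthInstance.maxHeartbeats 400000 in
open HQRaux in
/-- Let `G` be a profinite group, `H` an open subgroup, `μ` the Haar measure with
`μ(H) = 1`, `χ : H → ℂˣ` a continuous homomorphism, and `x₀ ∈ G` with `x₀ ∉ H`.
Assume every `f` in the Hecke algebra `𝓗` vanishes outside `H ∪ H x₀ H`, and that the
induced representation `U` has a `G`-invariant subspace `W` with `0 < dim W < dim U`.
Set `λ = (dim U - dim W)/dim W`.  Then there is `f ∈ 𝓗` vanishing identically on `H`
and not identically zero (hence supported on `H x₀ H`) such that `f ⋆ φ = λ·φ` for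
every `φ ∈ W`, and `f` satisfies the quadratic relation `f ⋆ f = (λ - 1)·f + λ·χ̇`,
i.e. `(Θ(f) - λ)(Θ(f) + 1) = 0` on `U`. -/
theorem hecke_operator_quadratic_relation
    {G : Type*} [Group G] [TopologicalSpace G] [IsTopologicalGroup G]
    [CompactSpace G] [T2Space G] [TotallyDisconnectedSpace G]
    [MeasurableSpace G] [BorelSpace G]
    (μ : Measure G) [μ.IsHaarMeasure]
    (H : Subgroup G) (hHopen : IsOpen (H : Set G)) (hμH : μ (H : Set G) = 1)
    (χ : H →* ℂˣ) (hχ : Continuous fun h : H => (χ h : ℂ))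
    (x₀ : G) (hx₀ : x₀ ∉ H)
    (hsupp : ∀ f ∈ heckeSet H χ, ∀ y : G,
        y ∉ H → ¬(∃ h₁ ∈ H, ∃ h₂ ∈ H, y = h₁ * x₀ * h₂) → f y = 0)
    (W : Submodule ℂ (G → ℂ)) (hWU : W ≤ inducedSubspace H χ)
    (hWinv : ∀ φ ∈ W, ∀ g : G, (fun x => φ (x * g)) ∈ W)
    (hW0 : 0 < Module.finrank ℂ W)
    (hWU' : Module.finrank ℂ W < Module.finrank ℂ (inducedSubspace H χ))
    (lam : ℂ)
    (hlam : lam = ((Module.finrank ℂ (inducedSubspace H χ) : ℂ) -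
        (Module.finrank ℂ W : ℂ)) / (Module.finrank ℂ W : ℂ)) :
    ∃ f ∈ heckeSet H χ,
      (∀ y ∈ H, f y = 0) ∧
      f ≠ 0 ∧
      (∀ φ ∈ W, ∀ y : G, heckeConv μ f φ y = lam * φ y) ∧
      (∀ y : G, heckeConv μ f f y = (lam - 1) * f y + lam * chiDot H χ y) := by
  classical
  haveI : Finite (G ⧸ H) := Subgroup.quotient_finite_of_isOpen H hHopen
  haveI : Fintype (G ⧸ H) := Fintype.ofFinite _
  -- STEP 1 : an open normal subgroup N on which χ is trivial
  set T : Set H := (fun h : H => (χ h : ℂ)) ⁻¹' Metric.ball (1:ℂ) (1/4) with hT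
  have hTopen : IsOpen T := hχ.isOpen_preimage _ Metric.isOpen_ball
  have h1T : (1 : H) ∈ T := by simp [hT]
  have hSopen : IsOpen (Subtype.val '' T : Set G) := hHopen.isOpenMap_subtype_val T hTopen
  have h1S : (1:G) ∈ Subtype.val '' T := ⟨1, h1T, rfl⟩
  obtain ⟨C, hCclopen, h1C, hCsub⟩ := compact_exists_isClopen_in_isOpen hSopen h1S
  obtain ⟨N, hN⟩ :=
    IsTopologicalGroup.exist_openNormalSubgroup_sub_clopen_nhds_of_one hCclopen h1C
  have hNS : ∀ x ∈ N.toSubgroup, x ∈ Subtype.val '' T := fun x hx => hCsub (hN hx)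
  have hNH : ∀ x ∈ N.toSubgroup, x ∈ H := by
    intro x hx; obtain ⟨h, _, rfl⟩ := hNS x hx; exact h.2
  have hNχ : ∀ (x : G) (hx : x ∈ N.toSubgroup), (χ ⟨x, hNH x hx⟩ : ℂ) = 1 := by
    intro x hx
    have key : ∀ n : ℕ, ‖(χ ⟨x, hNH x hx⟩ : ℂ) ^ 2 ^ n - 1‖ ≤ 1/4 := by
      intro n
      have hxn : x ^ 2 ^ n ∈ N.toSubgroup := pow_mem hx _
      obtain ⟨h, hhT, hval⟩ := hNS _ hxn
      have hsub : (⟨x, hNH x hx⟩ : H) ^ 2 ^ n = h := by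
        ext; rw [SubgroupClass.coe_pow]; exact hval.symm
      have hball : ‖(χ h : ℂ) - 1‖ < 1/4 := by
        have h3 := hhT; simp only [hT, Set.mem_preimage, Metric.mem_ball, Complex.dist_eq] at h3
        exact h3
      calc ‖(χ ⟨x, hNH x hx⟩ : ℂ) ^ 2 ^ n - 1‖
          = ‖(χ ((⟨x, hNH x hx⟩ : H) ^ 2 ^ n) : ℂ) - 1‖ := by rw [map_pow]; push_cast; ring_nf
        _ = ‖(χ h : ℂ) - 1‖ := by rw [hsub]
        _ ≤ 1/4 := le_of_lt hball
    exact pow_small key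
  haveI : Finite (G ⧸ N.toSubgroup) :=
    Subgroup.quotient_finite_of_isOpen N.toSubgroup N.toOpenSubgroup.isOpen
  haveI : Fintype (G ⧸ N.toSubgroup) := Fintype.ofFinite _
  -- STEP 2 : N acts trivially on U
  have hNact : ∀ (ν : G), ν ∈ N.toSubgroup → ∀ φ ∈ inducedSubspace H χ, ∀ x : G,
      φ (x * ν) = φ x := by
    intro ν hν φ hφ x
    have hconj : x * ν * x⁻¹ ∈ N.toSubgroup := N.isNormal'.conj_mem ν hν x
    have h2 := mem_induced_iff.1 hφ ⟨x * ν * x⁻¹, hNH _ hconj⟩ x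
    rw [hNχ _ hconj, one_mul] at h2
    have e : (x * ν * x⁻¹) * x = x * ν := by group
    rw [e] at h2
    exact h2
  -- STEP 3 : translation operators and averaged projection
  set R : G → (G → ℂ) →ₗ[ℂ] (G → ℂ) := fun g =>
    { toFun := fun φ x => φ (x * g), map_add' := fun a b => rfl,
      map_smul' := fun c a => rfl } with hRdef
  have hRapp : ∀ (g : G) (ψ : G → ℂ) (x : G), R g ψ x = ψ (x * g) := fun g ψ x => rfl
  have hRR : ∀ (a b : G) (ψ : G → ℂ), R a (R b ψ) = R (a * b) ψ := by
    intro a b ψ; funext x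
    rw [hRapp, hRapp, hRapp, mul_assoc]
  have hR_U : ∀ φ ∈ inducedSubspace H χ, ∀ g : G, R g φ ∈ inducedSubspace H χ := by
    intro φ hφ g
    refine mem_induced_iff.2 fun h x => ?_
    rw [hRapp, hRapp, mul_assoc]
    exact mem_induced_iff.1 hφ h (x * g)
  have hR_W : ∀ ψ ∈ W, ∀ g : G, R g ψ ∈ W := fun ψ hψ g => hWinv ψ hψ g
  have hNR : ∀ (ν : G), ν ∈ N.toSubgroup → ∀ φ ∈ inducedSubspace H χ, R ν φ = φ := by
    intro ν hν φ hφ; funext x; rw [hRapp]; exact hNact ν hν φ hφ x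
  obtain ⟨W', hWc⟩ := W.exists_isCompl
  set π : (G → ℂ) →ₗ[ℂ] (G → ℂ) := W.subtype ∘ₗ (W.linearProjOfIsCompl W' hWc) with hπdef
  have hπW : ∀ ψ, π ψ ∈ W := fun ψ => (W.linearProjOfIsCompl W' hWc ψ).2
  have hπid : ∀ ψ ∈ W, π ψ = ψ := by
    intro ψ hψ
    have h2 := Submodule.linearProjOfIsCompl_apply_left hWc ⟨ψ, hψ⟩
    have h3 := congrArg (W.subtype) h2
    exact h3
  set m : ℕ := Fintype.card (G ⧸ N.toSubgroup) with hm
  have hm0 : (m : ℂ) ≠ 0 := by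
    have : 0 < m := Fintype.card_pos
    exact_mod_cast Nat.cast_ne_zero.2 (Nat.pos_iff_ne_zero.1 this)
  set E : (G → ℂ) →ₗ[ℂ] (G → ℂ) :=
    (m : ℂ)⁻¹ • ∑ q : G ⧸ N.toSubgroup,
      (R (Quotient.out q)) ∘ₗ π ∘ₗ (R (Quotient.out q)⁻¹) with hEdef
  have hEapp : ∀ ψ : G → ℂ, E ψ = (m : ℂ)⁻¹ •
      ∑ q : G ⧸ N.toSubgroup, R (Quotient.out q) (π (R (Quotient.out q)⁻¹ ψ)) := by
    intro ψ
    rw [hEdef]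
    rw [LinearMap.smul_apply, LinearMap.sum_apply]
    rfl
  have hE_W : ∀ ψ : G → ℂ, E ψ ∈ W := by
    intro ψ
    rw [hEapp]
    exact W.smul_mem _ (W.sum_mem fun q _ => hR_W _ (hπW _) _)
  have hE_id : ∀ ψ ∈ W, E ψ = ψ := by
    intro ψ hψ
    rw [hEapp]
    have hterm : ∀ q : G ⧸ N.toSubgroup,
        R (Quotient.out q) (π (R (Quotient.out q)⁻¹ ψ)) = ψ := by
      intro q
      rw [hπid _ (hR_W ψ hψ _), hRR]
      rw [show Quotient.out q * (Quotient.out q)⁻¹ = 1 by group]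
      funext x; rw [hRapp, mul_one]
    rw [Finset.sum_congr rfl fun q _ => hterm q, Finset.sum_const, Finset.card_univ]
    rw [← hm, ← Nat.cast_smul_eq_nsmul ℂ m ψ, smul_smul, inv_mul_cancel₀ hm0, one_smul]
  -- STEP 4 : equivariance of E on U
  have hE_comm : ∀ φ ∈ inducedSubspace H χ, ∀ g : G, E (R g φ) = R g (E φ) := by
    intro φ hφ g
    set D : G → (G → ℂ) := fun u => R u (π (R (u⁻¹ * g) φ)) with hDdef
    have hDwd : ∀ u v : G,
        (QuotientGroup.mk u : G ⧸ N.toSubgroup) = QuotientGroup.mk v → D u = D v := by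
      intro u v huv
      have hν : u⁻¹ * v ∈ N.toSubgroup := QuotientGroup.eq.1 huv
      have hv : v = u * (u⁻¹ * v) := by group
      set ν : G := u⁻¹ * v with hνdef
      have e1 : R (v⁻¹ * g) φ = R (u⁻¹ * g) φ := by
        funext x
        rw [hRapp, hRapp]
        have e2 : x * (v⁻¹ * g) = (x * ν⁻¹) * (u⁻¹ * g) := by
          rw [hνdef]; group
        rw [e2]
        have e3 := hNact ν⁻¹ (inv_mem hν) (R (u⁻¹ * g) φ) (hR_U φ hφ _) x
        rw [hRapp, hRapp] at e3
        exact e3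
      have e4 : ∀ ψ', ψ' ∈ W → R v ψ' = R u ψ' := by
        intro ψ' hψ'
        funext x
        rw [hRapp, hRapp]
        have e5 : x * v = (x * u) * ν := by rw [hνdef]; group
        rw [e5]
        exact hNact ν hν ψ' (hWU hψ') (x * u)
      rw [hDdef]
      simp only
      rw [e1, e4 _ (hπW _)]
    have happ1 : E (R g φ) = (m : ℂ)⁻¹ • ∑ q : G ⧸ N.toSubgroup, D (Quotient.out q) := by
      rw [hEapp]
      congr 1
      refine Finset.sum_congr rfl fun q _ => ?_
      rw [hDdef]
      simp only
      rw [hRR]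
    have happ2 : R g (E φ) = (m : ℂ)⁻¹ • ∑ q : G ⧸ N.toSubgroup, D (g * Quotient.out q) := by
      rw [hEapp, _root_.map_smul, map_sum]
      congr 1
      refine Finset.sum_congr rfl fun q _ => ?_
      rw [hDdef]
      simp only
      rw [hRR]
      congr 2
      group
    have hre : ∀ q : G ⧸ N.toSubgroup, D (g * Quotient.out q) = D (Quotient.out (g • q)) := by
      intro q
      apply hDwd
      have e6 : (QuotientGroup.mk (g * Quotient.out q) : G ⧸ N.toSubgroup) = g • q := by
        rw [← smul_eq_mul]
        exact MulAction.Quotient.mk_smul_out N.toSubgroup g q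
      rw [e6]
      exact (QuotientGroup.out_eq' _).symm
    have hsum : ∑ q : G ⧸ N.toSubgroup, D (g * Quotient.out q)
        = ∑ q : G ⧸ N.toSubgroup, D (Quotient.out q) := by
      rw [Finset.sum_congr rfl fun q _ => hre q]
      exact Fintype.sum_bijective (g • ·) (MulAction.bijective g) _ _ (fun q => rfl)
    rw [happ1, happ2, hsum]
  -- STEP 5 : f₀ = E χ̇ and the key identity
  set χd : G → ℂ := chiDot H χ with hχd
  have hχdU : χd ∈ inducedSubspace H χ := chiDot_mem_induced
  set f₀ : G → ℂ := E χd with hf₀def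
  have hf₀W : f₀ ∈ W := hE_W χd
  have hf₀U : f₀ ∈ inducedSubspace H χ := hWU hf₀W
  have hRχd : ∀ h : H, R (↑h) χd = (χ h : ℂ) • χd := by
    intro h; funext x
    rw [hRapp, Pi.smul_apply, smul_eq_mul, hχd, chiDot_right x h]
    ring
  have hf₀RE : ∀ (x : G) (h : H), f₀ (x * ↑h) = f₀ x * (χ h : ℂ) := by
    intro x h
    have e1 : R (↑h : G) f₀ = E (R (↑h : G) χd) := (hE_comm χd hχdU ↑h).symm
    rw [hRχd, _root_.map_smul] at e1
    have e2 := congrFun e1 x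
    rw [hRapp, Pi.smul_apply, smul_eq_mul] at e2
    rw [e2, ← hf₀def]; ring
  have hconv_f₀_χd : ∀ z : G, heckeConv μ f₀ χd z = f₀ z :=
    fun z => conv_chiDot_right μ hHopen hμH hf₀RE z
  have hexpand : ∀ φ, φ ∈ inducedSubspace H χ →
      φ = ∑ q' : G ⧸ H, φ ((Quotient.out q')⁻¹) • R (Quotient.out q') χd := by
    intro φ hφ
    funext z
    rw [Finset.sum_apply, expansion hφ z]
    refine Finset.sum_congr rfl fun q' _ => ?_
    rw [Pi.smul_apply, hRapp, smul_eq_mul, hχd]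
  have hKI : ∀ φ ∈ inducedSubspace H χ, ∀ y : G, heckeConv μ f₀ φ y = E φ y := by
    intro φ hφ y
    have hEφ : E φ y = ∑ q' : G ⧸ H, φ ((Quotient.out q')⁻¹) * f₀ (y * Quotient.out q') := by
      conv_lhs => rw [hexpand φ hφ]
      rw [map_sum, Finset.sum_apply]
      refine Finset.sum_congr rfl fun q' _ => ?_
      rw [_root_.map_smul, Pi.smul_apply, smul_eq_mul]
      congr 1
      rw [hE_comm χd hχdU (Quotient.out q'), hRapp, ← hf₀def]
    rw [conv_eq_sum μ hHopen hμH hf₀RE hφ y, hEφ]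
    calc ∑ q : G ⧸ H, f₀ (Quotient.out q) * φ ((Quotient.out q)⁻¹ * y)
        = ∑ q : G ⧸ H, ∑ q' : G ⧸ H, φ ((Quotient.out q')⁻¹) *
            (f₀ (Quotient.out q) * χd ((Quotient.out q)⁻¹ * (y * Quotient.out q'))) := by
          refine Finset.sum_congr rfl fun q _ => ?_
          rw [expansion hφ ((Quotient.out q)⁻¹ * y), Finset.mul_sum]
          refine Finset.sum_congr rfl fun q' _ => ?_
          rw [hχd, show (Quotient.out q)⁻¹ * y * Quotient.out q'
              = (Quotient.out q)⁻¹ * (y * Quotient.out q') by group]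
          ring
      _ = ∑ q' : G ⧸ H, φ ((Quotient.out q')⁻¹) * heckeConv μ f₀ χd (y * Quotient.out q') := by
          rw [Finset.sum_comm]
          refine Finset.sum_congr rfl fun q' _ => ?_
          rw [conv_eq_sum μ hHopen hμH hf₀RE chiDot_mem_induced (y * Quotient.out q'),
            Finset.mul_sum]
      _ = ∑ q' : G ⧸ H, φ ((Quotient.out q')⁻¹) * f₀ (y * Quotient.out q') := by
          refine Finset.sum_congr rfl fun q' _ => ?_
          rw [hconv_f₀_χd]
  -- STEP 6 : coordinates and traces
  set toF : inducedSubspace H χ →ₗ[ℂ] (G ⧸ H → ℂ) :=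
    { toFun := fun φ q => φ.1 ((Quotient.out q)⁻¹),
      map_add' := fun a b => rfl, map_smul' := fun c a => rfl } with htoF
  set invFfun : (G ⧸ H → ℂ) → (G → ℂ) := fun c x =>
    chiDot H χ (x * Quotient.out (QuotientGroup.mk x⁻¹ : G ⧸ H)) * c (QuotientGroup.mk x⁻¹)
    with hinvFfun
  have hinvmem : ∀ c, invFfun c ∈ inducedSubspace H χ := by
    intro c
    refine mem_induced_iff.2 fun h x => ?_
    rw [hinvFfun]
    simp only
    have hq : (QuotientGroup.mk (↑h * x)⁻¹ : G ⧸ H) = QuotientGroup.mk x⁻¹ := by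
      apply QuotientGroup.eq.2
      simpa using h.2
    rw [hq, show (↑h * x) * Quotient.out (QuotientGroup.mk x⁻¹ : G ⧸ H)
        = ↑h * (x * Quotient.out (QuotientGroup.mk x⁻¹ : G ⧸ H)) by group]
    rw [chiDot_left h]
    ring
  set invF : (G ⧸ H → ℂ) →ₗ[ℂ] inducedSubspace H χ :=
    { toFun := fun c => ⟨invFfun c, hinvmem c⟩,
      map_add' := by
        intro a b; apply Subtype.ext; funext x
        show invFfun (a + b) x = invFfun a x + invFfun b x
        rw [hinvFfun]; simp only [Pi.add_apply]; ring,
      map_smul' := by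
        intro cst a; apply Subtype.ext; funext x
        show invFfun (cst • a) x = cst * invFfun a x
        rw [hinvFfun]; simp only [Pi.smul_apply, smul_eq_mul]; ring } with hinvF
  have h_toF_invF : ∀ c, toF (invF c) = c := by
    intro c; funext q
    show invFfun c ((Quotient.out q)⁻¹) = c q
    rw [hinvFfun]
    simp only [inv_inv, QuotientGroup.out_eq']
    rw [show (Quotient.out q)⁻¹ * Quotient.out q = 1 by group, chiDot_one, one_mul]
  have h_invF_toF : ∀ φ : inducedSubspace H χ, invF (toF φ) = φ := by
    intro φ
    apply Subtype.ext
    funext x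
    show invFfun (toF φ) x = φ.1 x
    rw [hinvFfun]
    simp only
    set s := Quotient.out (QuotientGroup.mk x⁻¹ : G ⧸ H) with hs
    have hxs : x * s ∈ H := by
      have h3 := QuotientGroup.eq.1 (QuotientGroup.out_eq' (QuotientGroup.mk x⁻¹ : G ⧸ H)).symm
      simpa using h3
    rw [chiDot_of_mem hxs]
    have h2 := mem_induced_iff.1 φ.2 ⟨x * s, hxs⟩ s⁻¹
    rw [show (↑(⟨x * s, hxs⟩ : H) : G) * s⁻¹ = x by group] at h2
    show (χ ⟨x * s, hxs⟩ : ℂ) * (toF φ) (QuotientGroup.mk x⁻¹) = φ.1 x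
    rw [htoF]
    exact h2.symm
  set coords : inducedSubspace H χ ≃ₗ[ℂ] (G ⧸ H → ℂ) :=
    LinearEquiv.ofLinear toF invF (LinearMap.ext fun c => h_toF_invF c)
      (LinearMap.ext fun φ => h_invF_toF φ) with hcoords
  haveI hUfd : FiniteDimensional ℂ (inducedSubspace H χ) :=
    LinearEquiv.finiteDimensional coords.symm
  haveI hWfd : FiniteDimensional ℂ W := by
    haveI h5 : FiniteDimensional ℂ (W.comap (inducedSubspace H χ).subtype) :=
      FiniteDimensional.finiteDimensional_submodule _
    exact Module.Finite.equiv (Submodule.comapSubtypeEquivOfLe hWU)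
  have hnQ : Module.finrank ℂ (inducedSubspace H χ) = Fintype.card (G ⧸ H) := by
    rw [coords.finrank_eq, Module.finrank_pi]
  have hEU : ∀ ψ ∈ inducedSubspace H χ, E ψ ∈ inducedSubspace H χ := fun ψ _ => hWU (hE_W ψ)
  set Erest : inducedSubspace H χ →ₗ[ℂ] inducedSubspace H χ := E.restrict hEU with hErest
  set W₀ : Submodule ℂ (inducedSubspace H χ) := W.comap (inducedSubspace H χ).subtype with hW₀
  have hpW₀ : ∀ ψ : inducedSubspace H χ, Erest ψ ∈ W₀ := by
    intro ψ
    rw [hW₀, Submodule.mem_comap]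
    exact hE_W _
  set p : inducedSubspace H χ →ₗ[ℂ] W₀ := LinearMap.codRestrict W₀ Erest hpW₀ with hp
  have htr1 : LinearMap.trace ℂ _ Erest = (Module.finrank ℂ W : ℂ) := by
    have hfact : Erest = W₀.subtype ∘ₗ p := rfl
    haveI : Module.Free ℂ ↥W₀ := Module.Free.of_divisionRing ℂ ↥W₀
    haveI : Module.Free ℂ ↥(inducedSubspace H χ) :=
      Module.Free.of_divisionRing ℂ ↥(inducedSubspace H χ)
    haveI : Module.Finite ℂ ↥W₀ := FiniteDimensional.finiteDimensional_submodule W₀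
    have hcomm := LinearMap.trace_comp_comm' (R := ℂ) (M := ↥(inducedSubspace H χ))
      (N := ↥W₀) p W₀.subtype
    rw [hfact, hcomm]
    have hid : p ∘ₗ W₀.subtype = LinearMap.id := by
      apply LinearMap.ext; intro ww
      apply Subtype.ext; apply Subtype.ext
      show E (ww.1 : G → ℂ) = (ww.1 : G → ℂ)
      exact hE_id _ ww.2
    have hidtr := LinearMap.trace_id (R := ℂ) (M := ↥W₀)
    rw [hid, hidtr]
    rw [(Submodule.comapSubtypeEquivOfLe hWU).finrank_eq]
  have htr2 : LinearMap.trace ℂ _ Erest = (Fintype.card (G ⧸ H) : ℂ) * f₀ 1 := by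
    rw [← LinearMap.trace_conj' Erest coords]
    rw [LinearMap.trace_eq_matrix_trace ℂ (Pi.basisFun ℂ (G ⧸ H))]
    rw [LinearMap.toMatrix_eq_toMatrix']
    rw [Matrix.trace]
    have hdiag : ∀ q : G ⧸ H,
        Matrix.diag (LinearMap.toMatrix' (coords.conj Erest)) q = f₀ 1 := by
      intro q
      rw [Matrix.diag_apply, LinearMap.toMatrix'_apply]
      set δq : G ⧸ H → ℂ := fun q' => if q' = q then 1 else 0 with hδq
      -- identify coords.symm δq
      have hsymm : coords.symm δq = invF δq := rfl
      have heq : ((invF δq : inducedSubspace H χ) : G → ℂ)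
          = fun x => chiDot H χ (x * Quotient.out q) := by
        funext x
        show invFfun δq x = chiDot H χ (x * Quotient.out q)
        rw [hinvFfun]
        simp only
        by_cases hc : (QuotientGroup.mk x⁻¹ : G ⧸ H) = q
        · simp only [hδq]; subst hc; simp
        · have hnm : x * Quotient.out q ∉ H := by
            intro hm
            apply hc
            have h4 : (QuotientGroup.mk x⁻¹ : G ⧸ H) = QuotientGroup.mk (Quotient.out q) :=
              QuotientGroup.eq.2 (by simpa using hm)
            rw [QuotientGroup.out_eq'] at h4
            exact h4
          simp only [hδq, if_neg hc, mul_zero]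
          exact (chiDot_of_not_mem hnm).symm
      have hval : (coords.conj Erest) δq q
          = E ((invF δq : inducedSubspace H χ) : G → ℂ) ((Quotient.out q)⁻¹) := by
        rw [LinearEquiv.conj_apply]
        rfl
      have hδ : (Pi.single q 1 : G ⧸ H → ℂ) = δq := by
        funext q'; simp [hδq, Pi.single_apply]
      rw [hδ]
      rw [hval, heq]
      have hmem2 : (fun x => chiDot H χ (x * Quotient.out q)) ∈ inducedSubspace H χ := by
        rw [← heq]; exact (invF δq).2
      rw [← hKI _ hmem2 ((Quotient.out q)⁻¹)]
      rw [conv_eq_sum μ hHopen hμH hf₀RE hmem2 ((Quotient.out q)⁻¹)]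
      have hterm : ∀ q' : G ⧸ H, f₀ (Quotient.out q') *
          chiDot H χ ((Quotient.out q')⁻¹ * (Quotient.out q)⁻¹ * Quotient.out q)
          = f₀ (Quotient.out q') * chiDot H χ ((Quotient.out q')⁻¹) := by
        intro q'
        rw [show (Quotient.out q')⁻¹ * (Quotient.out q)⁻¹ * Quotient.out q
            = (Quotient.out q')⁻¹ by group]
      rw [Finset.sum_congr rfl fun q' _ => hterm q']
      rw [Finset.sum_eq_single (QuotientGroup.mk (1 : G) : G ⧸ H)]
      · set s := Quotient.out (QuotientGroup.mk (1 : G) : G ⧸ H) with hs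
        have hsH : s ∈ H := by
          have h3 := QuotientGroup.eq.1 (QuotientGroup.out_eq' (QuotientGroup.mk (1:G) : G ⧸ H)).symm
          simpa using h3
        have hf₀s : f₀ s = f₀ 1 * (χ ⟨s, hsH⟩ : ℂ) := by
          have := hf₀RE 1 ⟨s, hsH⟩
          rwa [one_mul] at this
        rw [hf₀s, chiDot_of_mem (inv_mem hsH)]
        have hinv : (⟨s⁻¹, inv_mem hsH⟩ : H) = (⟨s, hsH⟩ : H)⁻¹ := rfl
        rw [hinv]
        calc f₀ 1 * (χ ⟨s, hsH⟩ : ℂ) * (χ (⟨s, hsH⟩ : H)⁻¹ : ℂ)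
            = f₀ 1 * ((χ ⟨s, hsH⟩ : ℂ) * (χ (⟨s, hsH⟩ : H)⁻¹ : ℂ)) := by ring
          _ = f₀ 1 := by rw [chi_mul_chi_inv]; ring
      · intro q' _ hq'
        have hnm : (Quotient.out q')⁻¹ ∉ H := by
          intro hm
          apply hq'
          have h4 : (QuotientGroup.mk (1:G) : G ⧸ H) = QuotientGroup.mk (Quotient.out q') :=
            QuotientGroup.eq.2 (by simpa using inv_mem hm)
          rw [QuotientGroup.out_eq'] at h4
          exact h4.symm
        rw [chiDot_of_not_mem hnm, mul_zero]
      · intro h; exact absurd (Finset.mem_univ _) h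
    rw [Finset.sum_congr rfl fun q _ => hdiag q, Finset.sum_const, Finset.card_univ]
    rw [nsmul_eq_mul]
  have hf₀1 : (Fintype.card (G ⧸ H) : ℂ) * f₀ 1 = (Module.finrank ℂ W : ℂ) := by
    rw [← htr2, htr1]
  -- STEP 7 : the function f and the conclusions
  have hcard : (Fintype.card (G ⧸ H) : ℂ) = (Module.finrank ℂ (inducedSubspace H χ) : ℂ) := by
    rw [hnQ]
  have hw0 : (Module.finrank ℂ W : ℂ) ≠ 0 :=
    Nat.cast_ne_zero.2 (Nat.pos_iff_ne_zero.1 hW0)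
  have hn0 : (Module.finrank ℂ (inducedSubspace H χ) : ℂ) ≠ 0 := by
    have h5 : 0 < Module.finrank ℂ (inducedSubspace H χ) := lt_trans hW0 hWU'
    exact Nat.cast_ne_zero.2 (Nat.pos_iff_ne_zero.1 h5)
  have hf₀one : f₀ 1
      = (Module.finrank ℂ W : ℂ) / (Module.finrank ℂ (inducedSubspace H χ) : ℂ) := by
    rw [eq_div_iff hn0, ← hcard, mul_comm]
    exact hf₀1
  have hlam1 : lam + 1
      = (Module.finrank ℂ (inducedSubspace H χ) : ℂ) / (Module.finrank ℂ W : ℂ) := by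
    rw [hlam]; field_simp; ring
  set f : G → ℂ := fun y => (lam + 1) * f₀ y - χd y with hf
  have hfsub : f = (lam + 1) • f₀ - χd := by
    funext y; simp only [hf, Pi.sub_apply, Pi.smul_apply, smul_eq_mul]
  have hfU : f ∈ inducedSubspace H χ := by
    rw [hfsub]; exact Submodule.sub_mem _ (Submodule.smul_mem _ _ hf₀U) hχdU
  have hχdRE : ∀ (x : G) (h : H), χd (x * ↑h) = χd x * (χ h : ℂ) := by
    intro x h; rw [hχd]; exact chiDot_right x h
  have hfRE : ∀ (x : G) (h : H), f (x * ↑h) = f x * (χ h : ℂ) := by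
    intro x h
    simp only [hf]
    rw [hf₀RE x h, hχdRE x h]; ring
  have hlocU : ∀ φ ∈ inducedSubspace H χ, IsLocallyConstant φ := by
    intro φ hφ
    rw [IsLocallyConstant.iff_exists_open]
    intro x
    refine ⟨(fun y => y * x⁻¹) ⁻¹' (N.toSubgroup : Set G),
      N.toOpenSubgroup.isOpen.preimage (continuous_id.mul continuous_const),
      by simpa using one_mem N.toSubgroup, ?_⟩
    intro y hy
    have hν : y * x⁻¹ ∈ N.toSubgroup := hy
    have h2 := mem_induced_iff.1 hφ ⟨y * x⁻¹, hNH _ hν⟩ x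
    rw [hNχ _ hν, one_mul] at h2
    rw [show (↑(⟨y * x⁻¹, hNH _ hν⟩ : H) : G) * x = y from inv_mul_cancel_right y x] at h2
    exact h2
  have hfHecke : f ∈ heckeSet H χ := by
    refine ⟨hlocU f hfU, fun h₁ h₂ x => ?_⟩
    rw [hfRE (↑h₁ * x) h₂, mem_induced_iff.1 hfU h₁ x]
  have hfH0 : ∀ y ∈ H, f y = 0 := by
    intro y hy
    simp only [hf]
    have h1 : f₀ y = f₀ 1 * (χ ⟨y, hy⟩ : ℂ) := by
      have h2 := hf₀RE 1 ⟨y, hy⟩; rwa [one_mul] at h2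
    rw [h1, hχd, chiDot_of_mem hy, hf₀one, hlam1]
    field_simp
    ring
  have hfne : f ≠ 0 := by
    intro h0
    have hχdW : χd ∈ W := by
      have hch : χd = (lam + 1) • f₀ := by
        funext y
        have h2 := congrFun h0 y
        simp only [hf, Pi.zero_apply] at h2
        simp only [Pi.smul_apply, smul_eq_mul]
        linear_combination -h2
      rw [hch]; exact Submodule.smul_mem _ _ hf₀W
    have hle : inducedSubspace H χ ≤ W := by
      intro φ hφ
      rw [hexpand φ hφ]
      exact Submodule.sum_mem _ fun q' _ => Submodule.smul_mem _ _ (hR_W _ hχdW _)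
    have hfr : Module.finrank ℂ (inducedSubspace H χ) ≤ Module.finrank ℂ W := by
      haveI h6 : FiniteDimensional ℂ (Submodule.comap W.subtype (inducedSubspace H χ)) :=
        FiniteDimensional.finiteDimensional_submodule _
      have he := LinearEquiv.finrank_eq (R := ℂ)
        (M := ↥(Submodule.comap W.subtype (inducedSubspace H χ)))
        (N := ↥(inducedSubspace H χ)) (Submodule.comapSubtypeEquivOfLe hle)
      rw [← he]
      exact Submodule.finrank_le _
    omega
  have hsplit : ∀ φ, φ ∈ inducedSubspace H χ → ∀ y : G,
      heckeConv μ f φ y = (lam + 1) * heckeConv μ f₀ φ y - heckeConv μ χd φ y := by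
    intro φ hφ y
    rw [conv_eq_sum μ hHopen hμH hfRE hφ y, conv_eq_sum μ hHopen hμH hf₀RE hφ y,
      conv_eq_sum μ hHopen hμH hχdRE hφ y]
    rw [Finset.mul_sum, ← Finset.sum_sub_distrib]
    refine Finset.sum_congr rfl fun q _ => ?_
    simp only [hf]
    ring
  refine ⟨f, hfHecke, hfH0, hfne, ?_, ?_⟩
  · intro φ hφW y
    have hφU := hWU hφW
    rw [hsplit φ hφU y, hKI φ hφU y, hχd, conv_chiDot_left μ hHopen hμH hφU y]
    rw [congrFun (hE_id φ hφW) y]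
    ring
  · intro y
    rw [hsplit f hfU y, hKI f hfU y, hχd, conv_chiDot_left μ hHopen hμH hfU y]
    have hEf : E f = lam • f₀ := by
      rw [hfsub, map_sub, _root_.map_smul, hE_id f₀ hf₀W, ← hf₀def]
      funext z
      simp only [Pi.sub_apply, Pi.smul_apply, smul_eq_mul]
      ring
    rw [hEf]
    simp only [Pi.smul_apply, smul_eq_mul, hf]
    ring
end
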